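/- arXiv:2011.09717 — 10 statements merged into one kernel-verified Lean document; each statement's English description precedes it below -/
import Mathlib

section
/- Let Γ be a symmetric clustering game on a finite simple graph G = (V,E) with c ≥ 2 colors and a positive distribution rule α with maximum disparity ᾱ. Then for every pure Nash equilibrium s of Γ and every strategy profile s*, we have u(s*) ≤ (1 + (1 + ᾱ)·ρ(G))·u(s); in particular, the Price of Anarchy of Γ is at most 1 + (1 + ᾱ)·ρ(G). -/
open Finset
open scoped Classical

variable {V : Type*}

noncomputable def edgesIn [Fintype V] (G : SimpleGraph V) (S : Finset V) : ℕ :=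
  (G.edgeFinset.filter fun e => ∀ v ∈ e, v ∈ S).card

noncomputable def maxDensity [Fintype V] (G : SimpleGraph V) : ℝ :=
  ⨆ S : {S : Finset V // S.Nonempty}, (edgesIn G S.1 : ℝ) / (S.1.card : ℝ)

noncomputable def maxDisparity (G : SimpleGraph V) (α : V → V → ℝ) : ℝ :=
  ⨆ p : {p : V × V // G.Adj p.1 p.2}, α p.1.1 p.1.2 / α p.1.2 p.1.1

noncomputable def util [Fintype V] (G : SimpleGraph V) (coord : V → V → Prop)
    (α w : V → V → ℝ) {c : ℕ} (q : V → Fin c → ℝ) (s : V → Fin c) (i : V) : ℝ :=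
  q i (s i) +
    ∑ j ∈ G.neighborFinset i,
      if (coord i j ∧ s i = s j) ∨ (¬ coord i j ∧ s i ≠ s j)
      then α i j / (α i j + α j i) * w i j else 0

noncomputable def welfare [Fintype V] (G : SimpleGraph V) (coord : V → V → Prop)
    (α w : V → V → ℝ) {c : ℕ} (q : V → Fin c → ℝ) (s : V → Fin c) : ℝ :=
  ∑ i, util G coord α w q s i

def IsNash [Fintype V] (G : SimpleGraph V) (coord : V → V → Prop)
    (α w : V → V → ℝ) {c : ℕ} (q : V → Fin c → ℝ) (s : V → Fin c) : Prop :=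
  ∀ (i : V) (k : Fin c),
    util G coord α w q (Function.update s i k) i ≤ util G coord α w q s i

noncomputable def utilA [Fintype V] (G : SimpleGraph V) (w : V → V → ℝ)
    {c : ℕ} (s : V → Fin c) (i : V) : ℝ :=
  ∑ j ∈ G.neighborFinset i, if s i = s j then w i j / 2 else 0

noncomputable def welfareA [Fintype V] (G : SimpleGraph V) (w : V → V → ℝ)
    {c : ℕ} (s : V → Fin c) : ℝ :=
  ∑ i, utilA G w s i

def IsNashA [Fintype V] (G : SimpleGraph V) (w : V → V → ℝ)
    {c : ℕ} (St : V → Finset (Fin c)) (s : V → Fin c) : Prop :=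
  ∀ i, ∀ k ∈ St i, utilA G w (Function.update s i k) i ≤ utilA G w s i

def IsEpsKEq [Fintype V] (G : SimpleGraph V) (w : V → V → ℝ)
    {c : ℕ} (St : V → Finset (Fin c)) (ε : ℝ) (k : ℕ) (s : V → Fin c) : Prop :=
  ∀ K : Finset V, K.Nonempty → K.card ≤ k →
    ∀ s' : V → Fin c, (∀ i ∈ K, s' i ∈ St i) → (∀ i ∉ K, s' i = s i) →
      ∃ j ∈ K, utilA G w s' j ≤ ε * utilA G w s j

def IsGWS (G : SimpleGraph V) (α : V → V → ℝ) : Prop :=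
  ∃ (σ : V → ℕ) (γ : V → ℝ), Function.Injective σ ∧ (∀ i, 0 ≤ γ i) ∧
    ∀ i j, G.Adj i j →
      (α i j = 0 → σ i < σ j) ∧
      (0 < α i j → α i j / (α i j + α j i) = γ i / (γ i + γ j))

def BRStep [Fintype V] (G : SimpleGraph V) (coord : V → V → Prop)
    (α w : V → V → ℝ) {c : ℕ} (q : V → Fin c → ℝ) (s s' : V → Fin c) : Prop :=
  ∃ i, (∀ j, j ≠ i → s' j = s j) ∧
    util G coord α w q s i < util G coord α w q s' i ∧
    ∀ k : Fin c, util G coord α w q (Function.update s i k) i ≤ util G coord α w q s' i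


/-! ### Auxiliary lemmas for stmt0 -/

noncomputable def edgeMinOn (f : V → ℝ) : Sym2 V → ℝ :=
  Sym2.lift ⟨fun i j => min (f i) (f j), fun i j => min_comm _ _⟩

@[simp] lemma minOn_mk (f : V → ℝ) (i j : V) : edgeMinOn f s(i, j) = min (f i) (f j) := rfl

lemma edgesIn_le_density [Fintype V] (G : SimpleGraph V) (T : Finset V) (hT : T.Nonempty) :
    (edgesIn G T : ℝ) ≤ maxDensity G * T.card := by
  have hb : BddAbove (Set.range fun S : {S : Finset V // S.Nonempty} =>
      (edgesIn G S.1 : ℝ) / (S.1.card : ℝ)) := Set.Finite.bddAbove (Set.finite_range _)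
  have h := le_ciSup hb ⟨T, hT⟩
  have hpos : (0 : ℝ) < T.card := by exact_mod_cast Finset.card_pos.2 hT
  rw [div_le_iff₀ hpos] at h
  simpa [maxDensity, mul_comm] using h

lemma sum_minOn_le_aux [Fintype V] (G : SimpleGraph V) :
    ∀ (n : ℕ) (T : Finset V) (f : V → ℝ), T.card ≤ n → (∀ i, 0 ≤ f i) →
      (∀ i ∉ T, f i = 0) →
      ∑ e ∈ G.edgeFinset, edgeMinOn f e ≤ maxDensity G * ∑ i, f i := by
  intro n
  induction n with
  | zero =>
    intro T f hcard hf hsupp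
    have hT : T = ∅ := Finset.card_eq_zero.1 (Nat.le_zero.1 hcard)
    have hf0 : ∀ i, f i = 0 := fun i => hsupp i (by simp [hT])
    have h1 : ∀ e ∈ G.edgeFinset, edgeMinOn f e = 0 := by
      intro e _
      induction e with
      | _ i j => simp [hf0]
    rw [Finset.sum_congr rfl h1]
    simp [hf0]
  | succ n ih =>
    intro T f hcard hf hsupp
    by_cases h0 : ∀ i ∈ T, f i = 0
    · have hf0 : ∀ i, f i = 0 := fun i => by
        by_cases hi : i ∈ T
        · exact h0 i hi
        · exact hsupp i hi
      have h1 : ∀ e ∈ G.edgeFinset, edgeMinOn f e = 0 := by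
        intro e _
        induction e with
        | _ i j => simp [hf0]
      rw [Finset.sum_congr rfl h1]
      simp [hf0]
    · push_neg at h0
      set T' : Finset V := T.filter (fun i => f i ≠ 0) with hT'
      have hT'ne : T'.Nonempty := by
        obtain ⟨i, hi, hfi⟩ := h0
        exact ⟨i, by simp [hT', hi, hfi]⟩
      have hsupp' : ∀ i ∉ T', f i = 0 := by
        intro i hi
        by_cases h : i ∈ T
        · by_contra hne; exact hi (by simp [hT', h, hne])
        · exact hsupp i h
      obtain ⟨i₀, hi₀, hmin⟩ := T'.exists_min_image f hT'ne
      set m := f i₀ with hm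
      have hmpos : 0 < m := by
        have : f i₀ ≠ 0 := (Finset.mem_filter.1 hi₀).2
        exact lt_of_le_of_ne (hf i₀) (Ne.symm this)
      set g : V → ℝ := fun i => if i ∈ T' then f i - m else 0 with hg
      have hg0 : ∀ i, 0 ≤ g i := by
        intro i
        simp only [hg]
        split_ifs with h
        · linarith [hmin i h]
        · exact le_refl 0
      have hgsupp : ∀ i ∉ T'.erase i₀, g i = 0 := by
        intro i hi
        simp only [hg]
        split_ifs with h
        · have : i = i₀ := by
            by_contra hne
            exact hi (Finset.mem_erase.2 ⟨hne, h⟩)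
          rw [this]; ring
        · rfl
      have hcard' : (T'.erase i₀).card ≤ n := by
        have h1 : T'.card ≤ T.card := Finset.card_filter_le _ _
        have h2 : (T'.erase i₀).card = T'.card - 1 := Finset.card_erase_of_mem hi₀
        have h3 : 1 ≤ T'.card := Finset.card_pos.2 hT'ne
        omega
      have IH := ih (T'.erase i₀) g hcard' hg0 hgsupp
      have hpt : ∀ e : Sym2 V, edgeMinOn f e =
          (if (∀ v ∈ e, v ∈ T') then m else 0) + edgeMinOn g e := by
        intro e
        induction e with
        | _ i j =>
          simp only [minOn_mk, Sym2.mem_iff, hg]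
          by_cases hi : i ∈ T' <;> by_cases hj : j ∈ T'
          · rw [if_pos (by rintro v (rfl | rfl) <;> assumption), if_pos hi, if_pos hj]
            rw [min_sub_sub_right]
            ring
          · rw [if_neg (fun h => hj (h j (Or.inr rfl))), if_pos hi, if_neg hj]
            have hfj : f j = 0 := hsupp' j hj
            rw [hfj, min_eq_right (hf i), min_eq_right (by linarith [hmin i hi])]
            ring
          · rw [if_neg (fun h => hi (h i (Or.inl rfl))), if_neg hi, if_pos hj]
            have hfi : f i = 0 := hsupp' i hi
            rw [hfi, min_eq_left (hf j), min_eq_left (by linarith [hmin j hj])]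
            ring
          · rw [if_neg (fun h => hi (h i (Or.inl rfl))), if_neg hi, if_neg hj]
            have hfi : f i = 0 := hsupp' i hi
            have hfj : f j = 0 := hsupp' j hj
            rw [hfi, hfj]
            simp
      have hsum1 : ∑ e ∈ G.edgeFinset, edgeMinOn f e =
          m * edgesIn G T' + ∑ e ∈ G.edgeFinset, edgeMinOn g e := by
        rw [Finset.sum_congr rfl (fun e _ => hpt e), Finset.sum_add_distrib]
        congr 1
        rw [Finset.sum_ite, Finset.sum_const, Finset.sum_const_zero, add_zero, edgesIn]
        simp [mul_comm]
      have hsum2 : ∑ i, f i = m * T'.card + ∑ i, g i := by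
        have : ∀ i, f i = (if i ∈ T' then m else 0) + g i := by
          intro i
          simp only [hg]
          split_ifs with h
          · ring
          · rw [hsupp' i h]; ring
        rw [Finset.sum_congr rfl (fun i _ => this i), Finset.sum_add_distrib]
        congr 1
        rw [Finset.sum_ite, Finset.sum_const, Finset.sum_const_zero, add_zero]
        simp [mul_comm]
      have hdens : (edgesIn G T' : ℝ) ≤ maxDensity G * T'.card :=
        edgesIn_le_density G T' hT'ne
      have h1 : m * (edgesIn G T' : ℝ) ≤ m * (maxDensity G * T'.card) :=
        mul_le_mul_of_nonneg_left hdens hmpos.le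
      rw [hsum1, hsum2]
      nlinarith [IH]

lemma sum_dart_eq [Fintype V] (G : SimpleGraph V) (g : V → V → ℝ) :
    ∑ d : G.Dart, g d.fst d.snd = ∑ i, ∑ j ∈ G.neighborFinset i, g i j := by
  let e : (Σ v : V, G.neighborSet v) ≃ G.Dart :=
    { toFun := fun s => ⟨(s.fst, s.snd), s.snd.property⟩
      invFun := fun d => ⟨d.fst, d.snd, d.adj⟩
      left_inv := fun s => by ext <;> simp
      right_inv := fun d => by ext <;> simp }
  rw [← Fintype.sum_equiv e (fun s => g (e s).fst (e s).snd) _ (fun _ => rfl)]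
  rw [show (Finset.univ : Finset ((v : V) × G.neighborSet v)) =
    Finset.univ.sigma (fun _ => Finset.univ) from rfl, Finset.sum_sigma]
  exact Finset.sum_congr rfl fun i _ => by
    rw [SimpleGraph.neighborFinset_def, ← Finset.sum_set_coe]; rfl

lemma sum_dart_edge_eq [Fintype V] (G : SimpleGraph V) (F : Sym2 V → ℝ) :
    ∑ d : G.Dart, F d.edge = 2 * ∑ e ∈ G.edgeFinset, F e := by
  rw [← Finset.sum_fiberwise_of_maps_to (g := SimpleGraph.Dart.edge)
    (fun d _ => SimpleGraph.mem_edgeFinset.2 d.edge_mem) (fun d => F d.edge)]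
  rw [Finset.mul_sum]
  refine Finset.sum_congr rfl fun e he => ?_
  have hc := G.dart_edge_fiber_card e (SimpleGraph.mem_edgeFinset.1 he)
  calc ∑ d ∈ Finset.univ.filter (fun d : G.Dart => d.edge = e), F d.edge
      = ∑ d ∈ Finset.univ.filter (fun d : G.Dart => d.edge = e), F e := by
        refine Finset.sum_congr rfl fun d hd => ?_
        rw [(Finset.mem_filter.1 hd).2]
    _ = 2 * F e := by rw [Finset.sum_const, hc]; simp [mul_comm]

lemma sum_nbr_swap [Fintype V] (G : SimpleGraph V) (g : V → V → ℝ) :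
    ∑ i, ∑ j ∈ G.neighborFinset i, g i j = ∑ i, ∑ j ∈ G.neighborFinset i, g j i := by
  rw [← sum_dart_eq G g, ← sum_dart_eq G (fun i j => g j i)]
  exact Fintype.sum_equiv (Function.Involutive.toPerm _ SimpleGraph.Dart.symm_involutive)
    _ _ (fun d => rfl)

section NashLemmas
variable [Fintype V] (G : SimpleGraph V) (coord : V → V → Prop)
  (α w : V → V → ℝ) {c : ℕ} (q : V → Fin c → ℝ)

lemma term_nonneg (hα : ∀ i j, G.Adj i j → 0 < α i j) (hw : ∀ i j, 0 ≤ w i j)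
    (s : V → Fin c) (i : V) : ∀ j ∈ G.neighborFinset i,
    (0:ℝ) ≤ if (coord i j ∧ s i = s j) ∨ (¬ coord i j ∧ s i ≠ s j)
      then α i j / (α i j + α j i) * w i j else 0 := by
  intro j hj
  have hadj : G.Adj i j := (SimpleGraph.mem_neighborFinset _ _ _).1 hj
  have ha := hα i j hadj
  have hb := hα j i hadj.symm
  split_ifs
  · exact mul_nonneg (div_nonneg ha.le (by linarith)) (hw i j)
  · exact le_refl 0

lemma util_nonneg (hα : ∀ i j, G.Adj i j → 0 < α i j) (hw : ∀ i j, 0 ≤ w i j)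
    (hq : ∀ i k, 0 ≤ q i k) (s : V → Fin c) (i : V) :
    0 ≤ util G coord α w q s i :=
  add_nonneg (hq i _) (Finset.sum_nonneg (term_nonneg G coord α w hα hw s i))

lemma q_le_util (hα : ∀ i j, G.Adj i j → 0 < α i j) (hw : ∀ i j, 0 ≤ w i j)
    (s : V → Fin c)
    (hs : ∀ (i : V) (k : Fin c),
      util G coord α w q (Function.update s i k) i ≤ util G coord α w q s i)
    (i : V) (k : Fin c) : q i k ≤ util G coord α w q s i := by
  refine le_trans ?_ (hs i k)
  unfold util
  have := Finset.sum_nonneg (term_nonneg G coord α w hα hw (Function.update s i k) i)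
  simp only [Function.update_self] at this ⊢
  linarith

lemma maxDisparity_nonneg (hα : ∀ i j, G.Adj i j → 0 < α i j) :
    0 ≤ maxDisparity G α :=
  Real.iSup_nonneg fun p => div_nonneg (hα _ _ p.2).le (hα _ _ p.2.symm).le

lemma w_le_util (hc : 2 ≤ c)
    (hα : ∀ i j, G.Adj i j → 0 < α i j) (hw : ∀ i j, 0 ≤ w i j)
    (hq : ∀ i k, 0 ≤ q i k) (s : V → Fin c)
    (hs : ∀ (i : V) (k : Fin c),
      util G coord α w q (Function.update s i k) i ≤ util G coord α w q s i)
    (i j : V) (hadj : G.Adj i j) :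
    w i j ≤ (1 + maxDisparity G α) * util G coord α w q s i := by
  have hij : i ≠ j := hadj.ne
  have ha := hα i j hadj
  have hb := hα j i hadj.symm
  have hk : ∃ k : Fin c, (coord i j ∧ k = s j) ∨ (¬ coord i j ∧ k ≠ s j) := by
    by_cases hco : coord i j
    · exact ⟨s j, Or.inl ⟨hco, rfl⟩⟩
    · obtain ⟨k, hk⟩ := Fintype.exists_ne_of_one_lt_card (by simp; omega) (s j)
      exact ⟨k, Or.inr ⟨hco, hk⟩⟩
  obtain ⟨k, hkk⟩ := hk
  set s' := Function.update s i k with hs'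
  have hs'i : s' i = k := Function.update_self i k s
  have hs'j : s' j = s j := Function.update_of_ne (Ne.symm hij) k s
  have hcond : (coord i j ∧ s' i = s' j) ∨ (¬ coord i j ∧ s' i ≠ s' j) := by
    rw [hs'i, hs'j]; exact hkk
  have hterm : α i j / (α i j + α j i) * w i j ≤ util G coord α w q s' i := by
    unfold util
    have h1 : α i j / (α i j + α j i) * w i j ≤
        ∑ l ∈ G.neighborFinset i,
          (if (coord i l ∧ s' i = s' l) ∨ (¬ coord i l ∧ s' i ≠ s' l)
            then α i l / (α i l + α l i) * w i l else 0) := by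
      have hjmem : j ∈ G.neighborFinset i := (SimpleGraph.mem_neighborFinset _ _ _).2 hadj
      have := Finset.single_le_sum (term_nonneg G coord α w hα hw s' i) hjmem
      rwa [if_pos hcond] at this
    linarith [hq i (s' i)]
  have hutil : α i j / (α i j + α j i) * w i j ≤ util G coord α w q s i :=
    hterm.trans (hs i k)
  set D := maxDisparity G α with hD
  have hbar : α j i / α i j ≤ D := by
    have hbd : BddAbove (Set.range fun p : {p : V × V // G.Adj p.1 p.2} =>
        α p.1.1 p.1.2 / α p.1.2 p.1.1) := Set.Finite.bddAbove (Set.finite_range _)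
    exact le_ciSup hbd ⟨(j, i), hadj.symm⟩
  have h1 : α j i ≤ D * α i j := (div_le_iff₀ ha).mp hbar
  have hDpos : 0 < 1 + D := by
    have : 0 < α j i / α i j := div_pos hb ha
    linarith
  have key : w i j ≤ (1 + D) * (α i j / (α i j + α j i) * w i j) := by
    rw [div_mul_eq_mul_div, ← mul_div_assoc, le_div_iff₀ (by linarith)]
    nlinarith [hw i j]
  exact key.trans (mul_le_mul_of_nonneg_left hutil hDpos.le)

end NashLemmas

theorem stmt0 [Fintype V] (G : SimpleGraph V) (coord : V → V → Prop)
    (hcoord : ∀ i j, coord i j ↔ coord j i)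
    (c : ℕ) (hc : 2 ≤ c)
    (α w : V → V → ℝ) (q : V → Fin c → ℝ)
    (hα : ∀ i j, G.Adj i j → 0 < α i j)
    (hw : ∀ i j, 0 ≤ w i j) (hwsymm : ∀ i j, w i j = w j i)
    (hq : ∀ i k, 0 ≤ q i k)
    (s sstar : V → Fin c) (hs : IsNash G coord α w q s) :
    welfare G coord α w q sstar ≤
      (1 + (1 + maxDisparity G α) * maxDensity G) * welfare G coord α w q s := by
  classical
  set D := maxDisparity G α with hD
  set ρ := maxDensity G with hρ
  have hDn : 0 ≤ D := maxDisparity_nonneg G α hα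
  have hun : ∀ i, 0 ≤ util G coord α w q s i := util_nonneg G coord α w q hα hw hq s
  set M : V → ℝ := fun i => (1 + D) * util G coord α w q s i with hM
  have hM0 : ∀ i, 0 ≤ M i := fun i => mul_nonneg (by linarith) (hun i)
  have hwM : ∀ i j, G.Adj i j → w i j ≤ min (M i) (M j) := by
    intro i j hadj
    refine le_min (w_le_util G coord α w q hc hα hw hq s hs i j hadj) ?_
    rw [hwsymm]
    exact w_le_util G coord α w q hc hα hw hq s hs j i hadj.symm
  -- split welfare of sstar
  have hsplit : welfare G coord α w q sstar =
      (∑ i, q i (sstar i)) + ∑ i, ∑ j ∈ G.neighborFinset i,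
        (if (coord i j ∧ sstar i = sstar j) ∨ (¬ coord i j ∧ sstar i ≠ sstar j)
          then α i j / (α i j + α j i) * w i j else 0) := by
    unfold welfare util
    rw [Finset.sum_add_distrib]
  have hq_le : (∑ i, q i (sstar i)) ≤ welfare G coord α w q s :=
    Finset.sum_le_sum fun i _ => q_le_util G coord α w q hα hw s hs i (sstar i)
  -- edge part
  set A := ∑ i, ∑ j ∈ G.neighborFinset i,
    (if (coord i j ∧ sstar i = sstar j) ∨ (¬ coord i j ∧ sstar i ≠ sstar j)
      then α i j / (α i j + α j i) * w i j else 0) with hA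
  set B := ∑ i, ∑ j ∈ G.neighborFinset i, α i j / (α i j + α j i) * w i j with hB
  have hAB : A ≤ B := by
    refine Finset.sum_le_sum fun i _ => Finset.sum_le_sum fun j hj => ?_
    have hadj : G.Adj i j := (SimpleGraph.mem_neighborFinset _ _ _).1 hj
    have ha := hα i j hadj
    have hb := hα j i hadj.symm
    split_ifs
    · exact le_refl _
    · exact mul_nonneg (div_nonneg ha.le (by linarith)) (hw i j)
  have hswap : B = ∑ i, ∑ j ∈ G.neighborFinset i, α j i / (α j i + α i j) * w j i := by
    rw [hB]; exact sum_nbr_swap G (fun i j => α i j / (α i j + α j i) * w i j)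
  have h2B : B + B = ∑ i, ∑ j ∈ G.neighborFinset i, w i j := by
    nth_rewrite 2 [hswap]
    rw [hB, ← Finset.sum_add_distrib]
    refine Finset.sum_congr rfl fun i _ => ?_
    rw [← Finset.sum_add_distrib]
    refine Finset.sum_congr rfl fun j hj => ?_
    have hadj : G.Adj i j := (SimpleGraph.mem_neighborFinset _ _ _).1 hj
    have ha := hα i j hadj
    have hb := hα j i hadj.symm
    rw [hwsymm j i, add_comm (α j i) (α i j)]
    field_simp
  have hwmin : ∑ i, ∑ j ∈ G.neighborFinset i, w i j ≤
      ∑ i, ∑ j ∈ G.neighborFinset i, min (M i) (M j) := by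
    refine Finset.sum_le_sum fun i _ => Finset.sum_le_sum fun j hj => ?_
    exact hwM i j ((SimpleGraph.mem_neighborFinset _ _ _).1 hj)
  have hmin2 : ∑ i, ∑ j ∈ G.neighborFinset i, min (M i) (M j) =
      2 * ∑ e ∈ G.edgeFinset, edgeMinOn M e := by
    rw [← sum_dart_eq G (fun i j => min (M i) (M j)), ← sum_dart_edge_eq G (edgeMinOn M)]
    exact Finset.sum_congr rfl fun d _ => rfl
  have hdens : ∑ e ∈ G.edgeFinset, edgeMinOn M e ≤ ρ * ∑ i, M i :=
    sum_minOn_le_aux G (Finset.univ.card) Finset.univ M le_rfl hM0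
      (fun i hi => absurd (Finset.mem_univ i) hi)
  have hMsum : ∑ i, M i = (1 + D) * welfare G coord α w q s := by
    rw [hM, welfare, Finset.mul_sum]
  rw [hsplit]
  have hfin : A ≤ ρ * ((1 + D) * welfare G coord α w q s) := by
    rw [← hMsum]
    linarith
  have hgoal : (1 + (1 + D) * ρ) * welfare G coord α w q s =
      welfare G coord α w q s + ρ * ((1 + D) * welfare G coord α w q s) := by ring
  rw [hgoal]
  exact add_le_add hq_le hfin
end

section
/- For all integers l, r ≥ 1 and all reals γ_L, γ_R > 0, there exists a symmetric coordination game on the complete bipartite graph K_{l,r} (with left part L of size l and right part R of size r), with c = l + r + 1 colors, unit edge weights, suitable individual preferences, and a distribution rule α satisfying α_{ij}/(α_{ij}+α_{ji}) = γ_i/(γ_i+γ_j) for every edge {i,j} (where γ_i = γ_L for i ∈ L and γ_i = γ_R for i ∈ R), such that the game has a pure Nash equilibrium s with u(s) = (l·γ_L + r·γ_R)/(γ_L+γ_R) > 0 and a strategy profile s* with u(s*) = u(s) + l·r; hence u(s*)/u(s) = 1 + l·r·(γ_L+γ_R)/(l·γ_L + r·γ_R). -/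
open Finset
open scoped Classical

variable {V : Type*}

lemma sum_ite_le_of_subsingleton {β : Type*} [Fintype β] (P : β → Prop) [DecidablePred P]
    (hP : ∀ x y, P x → P y → x = y) (c : ℝ) (hc : 0 ≤ c) :
    (∑ x : β, if P x then c else 0) ≤ c := by
  classical
  rw [Finset.sum_ite, Finset.sum_const, Finset.sum_const_zero, add_zero, nsmul_eq_mul]
  have hcard : (Finset.univ.filter P).card ≤ 1 :=
    Finset.card_le_one.mpr fun x hx y hy =>
      hP x y (by simpa using hx) (by simpa using hy)
  calc ((Finset.univ.filter P).card : ℝ) * c ≤ 1 * c := by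
        exact mul_le_mul_of_nonneg_right (by exact_mod_cast hcard) hc
    _ = c := one_mul c

lemma nbrL (l r : ℕ) (a : Fin l) :
    (completeBipartiteGraph (Fin l) (Fin r)).neighborFinset (Sum.inl a) =
      Finset.univ.image Sum.inr := by
  ext j
  cases j <;> simp [SimpleGraph.mem_neighborFinset]

lemma nbrR (l r : ℕ) (b : Fin r) :
    (completeBipartiteGraph (Fin l) (Fin r)).neighborFinset (Sum.inr b) =
      Finset.univ.image Sum.inl := by
  ext j
  cases j <;> simp [SimpleGraph.mem_neighborFinset]

theorem stmt1 (l r : ℕ) (hl : 1 ≤ l) (hr : 1 ≤ r)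
    (γL γR : ℝ) (hγL : 0 < γL) (hγR : 0 < γR) :
    ∃ (α w : (Fin l ⊕ Fin r) → (Fin l ⊕ Fin r) → ℝ)
      (q : (Fin l ⊕ Fin r) → Fin (l + r + 1) → ℝ),
      (∀ i j, 0 ≤ α i j) ∧
      (∀ i j, (completeBipartiteGraph (Fin l) (Fin r)).Adj i j → 0 < α i j + α j i) ∧
      (∀ i j, (completeBipartiteGraph (Fin l) (Fin r)).Adj i j →
        α i j / (α i j + α j i) =
          Sum.elim (fun _ => γL) (fun _ => γR) i /
            (Sum.elim (fun _ => γL) (fun _ => γR) i +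
              Sum.elim (fun _ => γL) (fun _ => γR) j)) ∧
      (∀ i j, (completeBipartiteGraph (Fin l) (Fin r)).Adj i j → w i j = 1) ∧
      (∀ i k, 0 ≤ q i k) ∧
      ∃ s : (Fin l ⊕ Fin r) → Fin (l + r + 1),
        IsNash (completeBipartiteGraph (Fin l) (Fin r)) (fun _ _ => True) α w q s ∧
        welfare (completeBipartiteGraph (Fin l) (Fin r)) (fun _ _ => True) α w q s =
          (l * γL + r * γR) / (γL + γR) ∧
        0 < welfare (completeBipartiteGraph (Fin l) (Fin r)) (fun _ _ => True) α w q s ∧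
        ∃ sstar : (Fin l ⊕ Fin r) → Fin (l + r + 1),
          welfare (completeBipartiteGraph (Fin l) (Fin r)) (fun _ _ => True) α w q sstar =
            welfare (completeBipartiteGraph (Fin l) (Fin r)) (fun _ _ => True) α w q s
              + l * r := by
  classical
  have hsum : (0:ℝ) < γL + γR := by linarith
  have hne : γL + γR ≠ 0 := ne_of_gt hsum
  set G := completeBipartiteGraph (Fin l) (Fin r) with hG
  set γ : Fin l ⊕ Fin r → ℝ := Sum.elim (fun _ => γL) (fun _ => γR) with hγdef
  have hγpos : ∀ i, 0 < γ i := by rintro (a | b) <;> simpa [hγdef]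
  set σ : Fin l ⊕ Fin r → Fin (l + r + 1) :=
    Sum.elim (fun a => ⟨a.1, by have := a.2; omega⟩)
      (fun b => ⟨l + b.1, by have := b.2; omega⟩) with hσdef
  have hσlt : ∀ i, (σ i).1 < l + r := by
    rintro (a | b)
    · have := a.2; simp only [hσdef, Sum.elim_inl]; omega
    · have := b.2; simp only [hσdef, Sum.elim_inr]; omega
  have hσinj : Function.Injective σ := by
    rintro (a | b) (a' | b') h <;>
      simp only [hσdef, Sum.elim_inl, Sum.elim_inr, Fin.mk.injEq] at h
    · exact congrArg Sum.inl (Fin.ext h)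
    · exact absurd h (by have := a.2; omega)
    · exact absurd h (by have := b.2; omega)
    · exact congrArg Sum.inr (Fin.ext (by omega))
  have hσne_last : ∀ i, σ i ≠ Fin.last (l + r) := by
    intro i h
    have := hσlt i
    rw [h, Fin.val_last] at this
    omega
  set α : (Fin l ⊕ Fin r) → (Fin l ⊕ Fin r) → ℝ := fun i _ => γ i with hα
  set w : (Fin l ⊕ Fin r) → (Fin l ⊕ Fin r) → ℝ := fun _ _ => 1 with hw
  set q : (Fin l ⊕ Fin r) → Fin (l + r + 1) → ℝ :=
    fun i k => if k = σ i ∨ k = Fin.last (l + r) then γ i / (γL + γR) else 0 with hq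
  have hcross : ∀ i j : Fin l ⊕ Fin r, G.Adj i j → γ i + γ j = γL + γR := by
    rintro (a | b) (a' | b') h <;> simp [hG, hγdef] at h ⊢
    ring
  -- basic rewriting of util
  have key : ∀ (t : Fin l ⊕ Fin r → Fin (l + r + 1)) (i : Fin l ⊕ Fin r),
      util G (fun _ _ => True) α w q t i =
        q i (t i) + ∑ j ∈ G.neighborFinset i,
          (if t i = t j then γ i / (γ i + γ j) else 0) := by
    intro t i
    unfold util
    congr 1
    refine Finset.sum_congr rfl fun j hj => ?_
    simp only [true_and, not_true, false_and, or_false, hα, hw, mul_one]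
  have hqnonneg : ∀ i k, 0 ≤ q i k := by
    intro i k
    simp only [hq]
    split
    · exact div_nonneg (hγpos i).le hsum.le
    · exact le_refl 0
  have hutils : ∀ i, util G (fun _ _ => True) α w q σ i = γ i / (γL + γR) := by
    intro i
    rw [key]
    have h1 : q i (σ i) = γ i / (γL + γR) := by simp [hq]
    have h2 : (∑ j ∈ G.neighborFinset i, if σ i = σ j then γ i / (γ i + γ j) else 0) = 0 := by
      refine Finset.sum_eq_zero fun j hj => ?_
      rw [if_neg]
      intro h
      exact ((SimpleGraph.mem_neighborFinset _ _ _).mp hj).ne (hσinj h)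
    rw [h1, h2, add_zero]
  have hws : welfare G (fun _ _ => True) α w q σ = (l * γL + r * γR) / (γL + γR) := by
    unfold welfare
    simp only [hutils]
    rw [Fintype.sum_sum_type]
    simp only [hγdef, Sum.elim_inl, Sum.elim_inr, Finset.sum_const, Finset.card_univ,
      Fintype.card_fin, nsmul_eq_mul]
    field_simp
  have hwspos : 0 < welfare G (fun _ _ => True) α w q σ := by
    rw [hws]
    apply div_pos _ hsum
    have h1 : (1:ℝ) ≤ l := by exact_mod_cast hl
    have h2 : (1:ℝ) ≤ r := by exact_mod_cast hr
    nlinarith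
  have degL : ∀ a : Fin l, (G.neighborFinset (Sum.inl a)).card = r := by
    intro a
    rw [hG, nbrL, Finset.card_image_of_injective _ Sum.inr_injective, Finset.card_univ,
      Fintype.card_fin]
  have degR : ∀ b : Fin r, (G.neighborFinset (Sum.inr b)).card = l := by
    intro b
    rw [hG, nbrR, Finset.card_image_of_injective _ Sum.inl_injective, Finset.card_univ,
      Fintype.card_fin]
  set sstar : Fin l ⊕ Fin r → Fin (l + r + 1) := fun _ => Fin.last (l + r) with hsstar
  have hstar : ∀ i, util G (fun _ _ => True) α w q sstar i =
      γ i / (γL + γR) + (G.neighborFinset i).card * (γ i / (γL + γR)) := by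
    intro i
    rw [key]
    have h1 : q i (sstar i) = γ i / (γL + γR) := by simp [hq, hsstar]
    have h2 : ∀ j ∈ G.neighborFinset i,
        (if sstar i = sstar j then γ i / (γ i + γ j) else 0) = γ i / (γL + γR) := by
      intro j hj
      rw [if_pos rfl, hcross i j ((SimpleGraph.mem_neighborFinset _ _ _).mp hj)]
    rw [h1, Finset.sum_congr rfl h2, Finset.sum_const, nsmul_eq_mul]
  have hwstar : welfare G (fun _ _ => True) α w q sstar =
      welfare G (fun _ _ => True) α w q σ + l * r := by
    unfold welfare
    simp only [hstar, hutils]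
    rw [Fintype.sum_sum_type, Fintype.sum_sum_type]
    simp only [degL, degR, hγdef, Sum.elim_inl, Sum.elim_inr, Finset.sum_const,
      Finset.card_univ, Fintype.card_fin, nsmul_eq_mul]
    field_simp
    ring
  have hmain : ∀ (i : Fin l ⊕ Fin r) (k : Fin (l + r + 1))
      (t : Fin l ⊕ Fin r → Fin (l + r + 1)), t i = k → (∀ j, j ≠ i → t j = σ j) →
      q i (t i) + (∑ j ∈ G.neighborFinset i, if t i = t j then γ i / (γ i + γ j) else 0) ≤
        γ i / (γL + γR) := by
    intro i k t ht1 ht2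
    have hupd : (∑ j ∈ G.neighborFinset i, if t i = t j then γ i / (γ i + γ j) else 0) =
        ∑ j ∈ G.neighborFinset i, if k = σ j then γ i / (γ i + γ j) else 0 := by
      refine Finset.sum_congr rfl fun j hj => ?_
      rw [ht1, ht2 j ((SimpleGraph.mem_neighborFinset _ _ _).mp hj).ne']
    rw [hupd, ht1]
    by_cases hk : k = σ i ∨ k = Fin.last (l + r)
    · have hq1 : q i k = γ i / (γL + γR) := by simp [hq, hk]
      have h0 : (∑ j ∈ G.neighborFinset i, if k = σ j then γ i / (γ i + γ j) else 0) = 0 := by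
        refine Finset.sum_eq_zero fun j hj => ?_
        rw [if_neg]
        intro h
        rcases hk with hk | hk
        · exact ((SimpleGraph.mem_neighborFinset _ _ _).mp hj).ne
            (hσinj (hk.symm.trans h).symm).symm
        · exact hσne_last j (h.symm.trans hk)
      rw [hq1, h0, add_zero]
    · have hq0 : q i k = 0 := by simp only [hq, if_neg hk]
      rw [hq0, zero_add]
      rcases i with a | b
      · rw [hG, nbrL, Finset.sum_image (fun x _ y _ h => Sum.inr_injective h)]
        simp only [hγdef, Sum.elim_inl, Sum.elim_inr]
        exact sum_ite_le_of_subsingleton (fun b => k = σ (Sum.inr b))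
          (fun x y hx hy => Sum.inr_injective (hσinj (hx.symm.trans hy)))
          (γL / (γL + γR)) (div_nonneg hγL.le hsum.le)
      · rw [hG, nbrR, Finset.sum_image (fun x _ y _ h => Sum.inl_injective h)]
        simp only [hγdef, Sum.elim_inl, Sum.elim_inr]
        rw [add_comm γR γL]
        exact sum_ite_le_of_subsingleton (fun a => k = σ (Sum.inl a))
          (fun x y hx hy => Sum.inl_injective (hσinj (hx.symm.trans hy)))
          (γR / (γL + γR)) (div_nonneg hγR.le hsum.le)
  have hNash : IsNash G (fun _ _ => True) α w q σ := by
    intro i k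
    rw [key, hutils i]
    exact hmain i k _ (by simp) (fun j hj => by simp [Function.update_apply, if_neg hj])
  exact ⟨α, w, q, fun i j => (hγpos i).le,
    fun i j _ => add_pos (hγpos i) (hγpos j),
    fun i j _ => rfl, fun i j _ => rfl, hqnonneg,
    σ, hNash, hws, hwspos, sstar, hwstar⟩
end

section
/- Let Γ be a symmetric clustering game on a finite simple graph G = (V,E) with c ≥ 2 colors and a positive distribution rule α with maximum disparity ᾱ, and suppose that every nonempty subset S ⊆ V satisfies |E[S]| ≤ 3|S| (as holds for every planar graph by Euler's formula). Then for every pure Nash equilibrium s and every strategy profile s*, u(s*) ≤ (4 + 3ᾱ)·u(s). -/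
open Finset
open scoped Classical

variable {V : Type*}

lemma pairs_card [Fintype V] (G : SimpleGraph V) (S : Finset V) :
    ((univ ×ˢ univ).filter fun p : V × V => G.Adj p.1 p.2 ∧ p.1 ∈ S ∧ p.2 ∈ S).card
      = 2 * edgesIn G S := by
  classical
  set G' : SimpleGraph V :=
    { Adj := fun a b => G.Adj a b ∧ a ∈ S ∧ b ∈ S
      symm := ⟨by intro a b h; exact ⟨h.1.symm, h.2.2, h.2.1⟩⟩
      loopless := ⟨by intro a h; exact G.ne_of_adj h.1 rfl⟩ } with hG'
  have hdeg : ∑ v, G'.degree v = 2 * G'.edgeFinset.card :=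
    G'.sum_degrees_eq_twice_card_edges
  have hedges : G'.edgeFinset.card = edgesIn G S := by
    unfold edgesIn
    congr 1
    ext e
    refine Sym2.ind (fun a b => ?_) e
    simp [SimpleGraph.mem_edgeFinset, SimpleGraph.mem_edgeSet, hG', Sym2.mem_iff]
  have hcard : ((univ ×ˢ univ).filter fun p : V × V => G.Adj p.1 p.2 ∧ p.1 ∈ S ∧ p.2 ∈ S).card
      = ∑ v, G'.degree v := by
    rw [card_filter, Finset.sum_product]
    refine Finset.sum_congr rfl fun i _ => ?_
    rw [← card_filter]
    simp [SimpleGraph.degree, SimpleGraph.neighborFinset_eq_filter, hG']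
  rw [hcard, hdeg, hedges]

lemma key_aux [Fintype V] (G : SimpleGraph V)
    (hpl : ∀ S : Finset V, S.Nonempty → edgesIn G S ≤ 3 * S.card) :
    ∀ n : ℕ, ∀ f : V → ℝ, (∀ v, 0 ≤ f v) →
      (univ.filter fun v => 0 < f v).card ≤ n →
      ∑ p ∈ (univ ×ˢ univ).filter (fun p : V × V => G.Adj p.1 p.2),
          min (f p.1) (f p.2) ≤ 6 * ∑ v, f v := by
  classical
  intro n
  induction n with
  | zero =>
    intro f hf hcard
    have hS : (univ.filter fun v => 0 < f v) = ∅ := card_eq_zero.mp (Nat.le_zero.mp hcard)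
    have hz : ∀ v, f v = 0 := by
      intro v
      by_contra h
      have : v ∈ (univ.filter fun v => 0 < f v) := by
        simp [lt_of_le_of_ne (hf v) (Ne.symm h)]
      simp [hS] at this
    simp [hz]
  | succ n ih =>
    intro f hf hcard
    set S := (univ.filter fun v => 0 < f v) with hSdef
    by_cases hSne : S.Nonempty
    · -- minimum value
      have himg : (S.image f).Nonempty := hSne.image f
      set m := (S.image f).min' himg with hm
      obtain ⟨v₀, hv₀S, hv₀⟩ := Finset.mem_image.mp ((S.image f).min'_mem himg)
      have hmpos : 0 < m := by
        rw [hm, ← hv₀]; exact (Finset.mem_filter.mp hv₀S).2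
      have hmle : ∀ v ∈ S, m ≤ f v := fun v hv =>
        Finset.min'_le _ _ (Finset.mem_image_of_mem f hv)
      set g : V → ℝ := fun v => if v ∈ S then f v - m else 0 with hg
      have hg0 : ∀ v, 0 ≤ g v := by
        intro v; simp only [hg]
        split
        · next h => linarith [hmle v h]
        · exact le_refl 0
      have hgsupp : (univ.filter fun v => 0 < g v) ⊆ S.erase v₀ := by
        intro v hv
        simp only [mem_filter, mem_univ, true_and] at hv
        have hvS : v ∈ S := by
          by_contra h; simp [hg, h] at hv
        refine Finset.mem_erase.mpr ⟨?_, hvS⟩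
        intro h; subst h
        simp only [hg, if_pos hvS] at hv
        rw [hv₀, ← hm] at hv
        linarith
      have hcard' : (univ.filter fun v => 0 < g v).card ≤ n := by
        calc (univ.filter fun v => 0 < g v).card ≤ (S.erase v₀).card :=
              Finset.card_le_card hgsupp
          _ = S.card - 1 := Finset.card_erase_of_mem hv₀S
          _ ≤ n := by omega
      have IH := ih g hg0 hcard'
      -- split the pair sum
      set P := (univ ×ˢ univ).filter (fun p : V × V => G.Adj p.1 p.2) with hP
      have hsplit : ∑ p ∈ P, min (f p.1) (f p.2)
          = ∑ p ∈ P.filter (fun p => p.1 ∈ S ∧ p.2 ∈ S), min (f p.1) (f p.2)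
            + ∑ p ∈ P.filter (fun p => ¬(p.1 ∈ S ∧ p.2 ∈ S)), min (f p.1) (f p.2) :=
        (Finset.sum_filter_add_sum_filter_not P _ _).symm
      have hzero : ∑ p ∈ P.filter (fun p => ¬(p.1 ∈ S ∧ p.2 ∈ S)), min (f p.1) (f p.2) = 0 := by
        refine Finset.sum_eq_zero fun p hp => ?_
        have hp' := (Finset.mem_filter.mp hp).2
        have hf0 : f p.1 = 0 ∨ f p.2 = 0 := by
          rcases not_and_or.mp hp' with h | h
          · left
            have : ¬ 0 < f p.1 := fun hlt => h (by simp [hSdef, hlt])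
            linarith [hf p.1]
          · right
            have : ¬ 0 < f p.2 := fun hlt => h (by simp [hSdef, hlt])
            linarith [hf p.2]
        rcases hf0 with h | h
        · rw [min_eq_left (by rw [h]; exact hf p.2), h]
        · rw [min_eq_right (by rw [h]; exact hf p.1), h]
      have hterm : ∀ p ∈ P.filter (fun p => p.1 ∈ S ∧ p.2 ∈ S),
          min (f p.1) (f p.2) = m + min (g p.1) (g p.2) := by
        intro p hp
        have hp' := (Finset.mem_filter.mp hp).2
        simp only [hg, if_pos hp'.1, if_pos hp'.2]
        rw [min_sub_sub_right]
        ring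
      have hfirst : ∑ p ∈ P.filter (fun p => p.1 ∈ S ∧ p.2 ∈ S), min (f p.1) (f p.2)
          = m * (P.filter (fun p => p.1 ∈ S ∧ p.2 ∈ S)).card
            + ∑ p ∈ P.filter (fun p => p.1 ∈ S ∧ p.2 ∈ S), min (g p.1) (g p.2) := by
        rw [Finset.sum_congr rfl hterm, Finset.sum_add_distrib, Finset.sum_const,
          nsmul_eq_mul, mul_comm]
      have hext : ∑ p ∈ P.filter (fun p => p.1 ∈ S ∧ p.2 ∈ S), min (g p.1) (g p.2)
          = ∑ p ∈ P, min (g p.1) (g p.2) := by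
        rw [← Finset.sum_filter_add_sum_filter_not P (fun p => p.1 ∈ S ∧ p.2 ∈ S)]
        have : ∑ p ∈ P.filter (fun p => ¬(p.1 ∈ S ∧ p.2 ∈ S)), min (g p.1) (g p.2) = 0 := by
          refine Finset.sum_eq_zero fun p hp => ?_
          have hp' := (Finset.mem_filter.mp hp).2
          rcases not_and_or.mp hp' with h | h
          · have h0 : g p.1 = 0 := by simp [hg, h]
            rw [h0, min_eq_left (hg0 p.2)]
          · have h0 : g p.2 = 0 := by simp [hg, h]
            rw [h0, min_eq_right (hg0 p.1)]
        rw [this, add_zero]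
      have hcardP : ((P.filter (fun p => p.1 ∈ S ∧ p.2 ∈ S)).card : ℝ) ≤ 6 * S.card := by
        have : P.filter (fun p => p.1 ∈ S ∧ p.2 ∈ S)
            = (univ ×ˢ univ).filter fun p : V × V => G.Adj p.1 p.2 ∧ p.1 ∈ S ∧ p.2 ∈ S := by
          rw [hP, Finset.filter_filter]
        rw [this, pairs_card]
        have := hpl S hSne
        push_cast
        rw [show (2 : ℝ) * edgesIn G S = 2 * (edgesIn G S : ℝ) by push_cast; ring] at *
        have h2 : (edgesIn G S : ℝ) ≤ 3 * S.card := by exact_mod_cast this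
        linarith
      have hgsum : ∑ v, g v = ∑ v, f v - m * S.card := by
        have : ∑ v, g v = ∑ v ∈ S, (f v - m) := by
          rw [← Finset.sum_filter_add_sum_filter_not univ (fun v => v ∈ S) g]
          have h1 : univ.filter (fun v => v ∈ S) = S := by
            ext v; simp
          have h2 : ∑ v ∈ univ.filter (fun v => ¬ v ∈ S), g v = 0 :=
            Finset.sum_eq_zero fun v hv => by
              simp [hg, (Finset.mem_filter.mp hv).2]
          rw [h1, h2, add_zero]
          exact Finset.sum_congr rfl fun v hv => by simp [hg, hv]
        rw [this, Finset.sum_sub_distrib, Finset.sum_const, nsmul_eq_mul, mul_comm]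
        congr 1
        rw [← Finset.sum_filter_add_sum_filter_not univ (fun v => v ∈ S) f]
        have h1 : univ.filter (fun v => v ∈ S) = S := by ext v; simp
        have h2 : ∑ v ∈ univ.filter (fun v => ¬ v ∈ S), f v = 0 :=
          Finset.sum_eq_zero fun v hv => by
            have h := (Finset.mem_filter.mp hv).2
            have : ¬ 0 < f v := fun hlt => h (by simp [hSdef, hlt])
            linarith [hf v]
        rw [h1, h2, add_zero]
      calc ∑ p ∈ P, min (f p.1) (f p.2)
          = m * (P.filter (fun p => p.1 ∈ S ∧ p.2 ∈ S)).card
            + ∑ p ∈ P, min (g p.1) (g p.2) := by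
            rw [hsplit, hzero, add_zero, hfirst, hext]
        _ ≤ m * (6 * S.card) + 6 * ∑ v, g v := by
            have := mul_le_mul_of_nonneg_left hcardP (le_of_lt hmpos)
            linarith [IH]
        _ = 6 * ∑ v, f v := by rw [hgsum]; ring
    · -- S empty
      have hz : ∀ v, f v = 0 := by
        intro v
        by_contra h
        exact hSne ⟨v, by simp [hSdef, lt_of_le_of_ne (hf v) (Ne.symm h)]⟩
      simp [hz]

theorem stmt3 [Fintype V] (G : SimpleGraph V) (coord : V → V → Prop)
    (hcoord : ∀ i j, coord i j ↔ coord j i)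
    (c : ℕ) (hc : 2 ≤ c)
    (α w : V → V → ℝ) (q : V → Fin c → ℝ)
    (hα : ∀ i j, G.Adj i j → 0 < α i j)
    (hw : ∀ i j, 0 ≤ w i j) (hwsymm : ∀ i j, w i j = w j i)
    (hq : ∀ i k, 0 ≤ q i k)
    (hplanar : ∀ S : Finset V, S.Nonempty → edgesIn G S ≤ 3 * S.card)
    (s sstar : V → Fin c) (hs : IsNash G coord α w q s) :
    welfare G coord α w q sstar ≤
      (4 + 3 * maxDisparity G α) * welfare G coord α w q s := by
  classical
  set ᾱ := maxDisparity G α with hᾱdef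
  -- basic positivity of shares
  have hshare_nonneg : ∀ i j, G.Adj i j → 0 ≤ α i j / (α i j + α j i) * w i j := by
    intro i j hij
    have h1 := hα i j hij
    have h2 := hα j i hij.symm
    have : 0 ≤ α i j / (α i j + α j i) := by positivity
    exact mul_nonneg this (hw i j)
  -- nonnegativity of utilities
  have hupos : ∀ (t : V → Fin c) (i : V), 0 ≤ util G coord α w q t i := by
    intro t i
    unfold util
    have : 0 ≤ ∑ j ∈ G.neighborFinset i,
        if (coord i j ∧ t i = t j) ∨ (¬ coord i j ∧ t i ≠ t j)
        then α i j / (α i j + α j i) * w i j else 0 := by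
      refine Finset.sum_nonneg fun j hj => ?_
      have hij := (G.mem_neighborFinset i j).mp hj
      split
      · exact hshare_nonneg i j hij
      · exact le_refl 0
    linarith [hq i (t i)]
  -- disparity is nonneg
  have hᾱ0 : 0 ≤ ᾱ := by
    refine Real.iSup_nonneg fun p => ?_
    have h1 := hα p.1.1 p.1.2 p.2
    have h2 := hα p.1.2 p.1.1 p.2.symm
    positivity
  -- disparity bound
  have hdisp : ∀ i j, G.Adj i j → α j i / α i j ≤ ᾱ := by
    intro i j hij
    have hb : BddAbove (Set.range fun p : {p : V × V // G.Adj p.1 p.2} =>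
        α p.1.1 p.1.2 / α p.1.2 p.1.1) := (Set.finite_range _).bddAbove
    exact le_ciSup hb ⟨(j, i), hij.symm⟩
  -- individual q bound
  have hqb : ∀ i, q i (sstar i) ≤ util G coord α w q s i := by
    intro i
    refine le_trans ?_ (hs i (sstar i))
    unfold util
    rw [Function.update_self]
    have : 0 ≤ ∑ j ∈ G.neighborFinset i,
        if (coord i j ∧ (Function.update s i (sstar i)) i = (Function.update s i (sstar i)) j)
          ∨ (¬ coord i j ∧ (Function.update s i (sstar i)) i ≠ (Function.update s i (sstar i)) j)
        then α i j / (α i j + α j i) * w i j else 0 := by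
      refine Finset.sum_nonneg fun j hj => ?_
      have hij := (G.mem_neighborFinset i j).mp hj
      split
      · exact hshare_nonneg i j hij
      · exact le_refl 0
    rw [Function.update_self] at this
    linarith
  -- edge bound: each satisfied-share is at most util
  have hedge : ∀ i j, G.Adj i j →
      α i j / (α i j + α j i) * w i j ≤ util G coord α w q s i := by
    intro i j hij
    have hji : j ≠ i := (G.ne_of_adj hij.symm)
    have : Nontrivial (Fin c) := Fin.nontrivial_iff_two_le.mpr hc
    obtain ⟨k, hk⟩ : ∃ k : Fin c,
        (coord i j ∧ k = s j) ∨ (¬ coord i j ∧ k ≠ s j) := by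
      by_cases h : coord i j
      · exact ⟨s j, Or.inl ⟨h, rfl⟩⟩
      · obtain ⟨k, hk⟩ := exists_ne (s j)
        exact ⟨k, Or.inr ⟨h, hk⟩⟩
    refine le_trans ?_ (hs i k)
    unfold util
    have hterm : α i j / (α i j + α j i) * w i j ≤
        ∑ j' ∈ G.neighborFinset i,
          if (coord i j' ∧ (Function.update s i k) i = (Function.update s i k) j')
            ∨ (¬ coord i j' ∧ (Function.update s i k) i ≠ (Function.update s i k) j')
          then α i j' / (α i j' + α j' i) * w i j' else 0 := by
      have hjmem : j ∈ G.neighborFinset i := (G.mem_neighborFinset i j).mpr hij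
      have hcond : (coord i j ∧ (Function.update s i k) i = (Function.update s i k) j)
          ∨ (¬ coord i j ∧ (Function.update s i k) i ≠ (Function.update s i k) j) := by
        rw [Function.update_self, Function.update_of_ne hji]
        exact hk
      calc α i j / (α i j + α j i) * w i j
          = (if (coord i j ∧ (Function.update s i k) i = (Function.update s i k) j)
              ∨ (¬ coord i j ∧ (Function.update s i k) i ≠ (Function.update s i k) j)
            then α i j / (α i j + α j i) * w i j else 0) := by rw [if_pos hcond]
        _ ≤ _ := by
            refine Finset.single_le_sum (f := fun j' =>
              if (coord i j' ∧ (Function.update s i k) i = (Function.update s i k) j')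
                ∨ (¬ coord i j' ∧ (Function.update s i k) i ≠ (Function.update s i k) j')
              then α i j' / (α i j' + α j' i) * w i j' else 0) (fun j' hj' => ?_) hjmem
            have hij' := (G.mem_neighborFinset i j').mp hj'
            split
            · exact hshare_nonneg i j' hij'
            · exact le_refl 0
    linarith [hq i (Function.update s i k i)]
  -- weight bound
  have hwb : ∀ i j, G.Adj i j → w i j ≤ (1 + ᾱ) * util G coord α w q s i := by
    intro i j hij
    have h1 := hα i j hij
    have h2 := hα j i hij.symm
    have hD : α i j + α j i ≠ 0 := by positivity
    have hkey : w i j = (α i j / (α i j + α j i) * w i j) * (1 + α j i / α i j) := by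
      field_simp
    rw [hkey]
    have hs1 : α i j / (α i j + α j i) * w i j ≤ util G coord α w q s i := hedge i j hij
    have hs0 : 0 ≤ α i j / (α i j + α j i) * w i j := hshare_nonneg i j hij
    have hr : 1 + α j i / α i j ≤ 1 + ᾱ := by linarith [hdisp i j hij]
    have hr0 : 0 ≤ 1 + α j i / α i j := by positivity
    calc (α i j / (α i j + α j i) * w i j) * (1 + α j i / α i j)
        ≤ util G coord α w q s i * (1 + ᾱ) :=
          mul_le_mul hs1 hr hr0 (hupos s i)
      _ = (1 + ᾱ) * util G coord α w q s i := by ring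
  -- pair machinery
  set P := (univ ×ˢ univ).filter (fun p : V × V => G.Adj p.1 p.2) with hPdef
  have hPmem : ∀ p : V × V, p ∈ P ↔ G.Adj p.1 p.2 := by
    intro p; simp [hPdef]
  have pair_sum : ∀ F : V → V → ℝ,
      ∑ p ∈ P, F p.1 p.2 = ∑ i, ∑ j ∈ G.neighborFinset i, F i j := by
    intro F
    rw [hPdef, Finset.sum_filter, Finset.sum_product]
    refine Finset.sum_congr rfl fun i _ => ?_
    rw [SimpleGraph.neighborFinset_eq_filter, Finset.sum_filter]
  have hswap : ∀ F : V × V → ℝ, ∑ p ∈ P, F p = ∑ p ∈ P, F p.swap := by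
    intro F
    refine Finset.sum_equiv (Equiv.prodComm V V) ?_ ?_
    · intro p
      rw [hPmem, hPmem]
      exact ⟨fun h => h.symm, fun h => h.symm⟩
    · intro p _
      rfl
  -- welfare of sstar bounded by q-part plus share-sum
  have hA : welfare G coord α w q sstar ≤
      (∑ i, q i (sstar i)) + ∑ p ∈ P, α p.1 p.2 / (α p.1 p.2 + α p.2 p.1) * w p.1 p.2 := by
    rw [pair_sum (fun i j => α i j / (α i j + α j i) * w i j)]
    unfold welfare util
    rw [Finset.sum_add_distrib]
    refine add_le_add le_rfl (Finset.sum_le_sum fun i _ => Finset.sum_le_sum fun j hj => ?_)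
    have hij := (G.mem_neighborFinset i j).mp hj
    split
    · exact le_rfl
    · exact hshare_nonneg i j hij
  -- share-sum equals half the weight-sum
  have hB : ∑ p ∈ P, α p.1 p.2 / (α p.1 p.2 + α p.2 p.1) * w p.1 p.2
      = (1 / 2) * ∑ p ∈ P, w p.1 p.2 := by
    have h := hswap (fun p => α p.1 p.2 / (α p.1 p.2 + α p.2 p.1) * w p.1 p.2)
    simp only [Prod.fst_swap, Prod.snd_swap] at h
    have h2 : ∑ p ∈ P, α p.1 p.2 / (α p.1 p.2 + α p.2 p.1) * w p.1 p.2
        + ∑ p ∈ P, α p.2 p.1 / (α p.2 p.1 + α p.1 p.2) * w p.2 p.1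
        = ∑ p ∈ P, w p.1 p.2 := by
      rw [← Finset.sum_add_distrib]
      refine Finset.sum_congr rfl fun p hp => ?_
      have hadj := (hPmem p).mp hp
      have h1 := hα p.1 p.2 hadj
      have h3 := hα p.2 p.1 hadj.symm
      have hD : α p.1 p.2 + α p.2 p.1 ≠ 0 := by positivity
      rw [hwsymm p.2 p.1, show α p.2 p.1 + α p.1 p.2 = α p.1 p.2 + α p.2 p.1 by ring]
      field_simp
    linarith
  -- each weight is at most min of scaled utilities
  set f : V → ℝ := fun v => (1 + ᾱ) * util G coord α w q s v with hfdef
  have hf0 : ∀ v, 0 ≤ f v := fun v => mul_nonneg (by linarith) (hupos s v)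
  have hC : ∑ p ∈ P, w p.1 p.2 ≤ ∑ p ∈ P, min (f p.1) (f p.2) := by
    refine Finset.sum_le_sum fun p hp => ?_
    have hadj := (hPmem p).mp hp
    refine le_min (hwb p.1 p.2 hadj) ?_
    rw [hwsymm p.1 p.2]
    exact hwb p.2 p.1 hadj.symm
  have hD := key_aux G hplanar (Fintype.card V) f hf0 (Finset.card_le_univ _)
  rw [← hPdef] at hD
  have hfsum : ∑ v, f v = (1 + ᾱ) * welfare G coord α w q s := by
    rw [hfdef]
    unfold welfare
    rw [Finset.mul_sum]
  have hq' : ∑ i, q i (sstar i) ≤ welfare G coord α w q s :=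
    Finset.sum_le_sum fun i _ => hqb i
  have hwelf0 : 0 ≤ welfare G coord α w q s :=
    Finset.sum_nonneg fun i _ => hupos s i
  calc welfare G coord α w q sstar
      ≤ (∑ i, q i (sstar i)) + ∑ p ∈ P, α p.1 p.2 / (α p.1 p.2 + α p.2 p.1) * w p.1 p.2 := hA
    _ = (∑ i, q i (sstar i)) + (1 / 2) * ∑ p ∈ P, w p.1 p.2 := by rw [hB]
    _ ≤ welfare G coord α w q s + (1 / 2) * (6 * ((1 + ᾱ) * welfare G coord α w q s)) := by
        have := le_trans hC hD
        rw [hfsum] at this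
        have h6 : (1 / 2 : ℝ) * ∑ p ∈ P, w p.1 p.2
            ≤ (1 / 2) * (6 * ((1 + ᾱ) * welfare G coord α w q s)) := by linarith
        linarith
    _ = (4 + 3 * ᾱ) * welfare G coord α w q s - welfare G coord α w q s * 0 := by ring
    _ = (4 + 3 * ᾱ) * welfare G coord α w q s := by ring
end

section
/- Let G = (V,E) be a finite simple graph and let S ⊆ V be nonempty. Then there exist an integer c ≥ 1, nonnegative edge weights w and nonnegative individual preferences q such that the resulting symmetric coordination game on G with c colors and the equal-split distribution rule has a pure Nash equilibrium s with u(s) = |S| and a strategy profile s* with u(s*) = |S| + 2|E[S]|; hence u(s*)/u(s) = 1 + 2|E[S]|/|S|. In particular, for every graph G the Price of Anarchy over symmetric coordination games on G with equal-split distribution rule is at least 1 + 2·ρ(G). -/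
open Finset
open scoped Classical

variable {V : Type*}

lemma sum_neighbor_eq_sum_darts [Fintype V] (G : SimpleGraph V) (f : V → V → ℝ) :
    ∑ i, ∑ j ∈ G.neighborFinset i, f i j = ∑ d : G.Dart, f d.fst d.snd := by
  classical
  rw [← Finset.sum_fiberwise_of_maps_to (g := fun d : G.Dart => d.fst)
    (fun d _ => Finset.mem_univ d.fst)]
  apply Finset.sum_congr rfl
  intro v _
  refine (Finset.sum_bij
    (fun (d : G.Dart) (hd : d ∈ Finset.univ.filter fun d => d.fst = v) => d.snd)
    ?_ ?_ ?_ ?_).symm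
  · intro d hd
    simp only [Finset.mem_filter] at hd
    simp [SimpleGraph.mem_neighborFinset, ← hd.2, d.adj]
  · intro d hd d' hd' h
    simp only [Finset.mem_filter] at hd hd'
    ext
    · rw [hd.2, hd'.2]
    · exact h
  · intro j hj
    rw [SimpleGraph.mem_neighborFinset] at hj
    exact ⟨⟨(v, j), hj⟩, by simp, rfl⟩
  · intro d hd
    simp only [Finset.mem_filter] at hd
    rw [hd.2]

lemma sum_darts_edge [Fintype V] (G : SimpleGraph V) (g : Sym2 V → ℝ) :
    ∑ d : G.Dart, g d.edge = ∑ e ∈ G.edgeFinset, 2 * g e := by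
  classical
  rw [← Finset.sum_fiberwise_of_maps_to (g := fun d : G.Dart => d.edge) (t := G.edgeFinset)
    (fun d _ => by rw [SimpleGraph.mem_edgeFinset]; exact d.edge_mem)]
  apply Finset.sum_congr rfl
  intro e he
  rw [Finset.sum_congr rfl (fun d hd => by
      simp only [Finset.mem_filter] at hd; rw [hd.2]),
    Finset.sum_const, nsmul_eq_mul]
  congr 1
  have := G.dart_edge_fiber_card e (by rwa [← SimpleGraph.mem_edgeFinset])
  norm_cast

lemma util_true_one [Fintype V] (G : SimpleGraph V) (w : V → V → ℝ) {c : ℕ}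
    (q : V → Fin c → ℝ) (s : V → Fin c) (i : V) :
    util G (fun _ _ => True) (fun _ _ => 1) w q s i =
      q i (s i) + ∑ j ∈ G.neighborFinset i, if s i = s j then w i j / 2 else 0 := by
  unfold util
  congr 1
  apply Finset.sum_congr rfl
  intro j _
  simp only [true_and, not_true_eq_false, false_and, or_false]
  split_ifs with h <;> ring

theorem stmt5 [Fintype V] (G : SimpleGraph V) (S : Finset V) (hS : S.Nonempty) :
    ∃ (c : ℕ), 1 ≤ c ∧
      ∃ (w : V → V → ℝ) (q : V → Fin c → ℝ),
        (∀ i j, 0 ≤ w i j) ∧ (∀ i j, w i j = w j i) ∧ (∀ i k, 0 ≤ q i k) ∧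
        ∃ s : V → Fin c,
          IsNash G (fun _ _ => True) (fun _ _ => 1) w q s ∧
          welfare G (fun _ _ => True) (fun _ _ => 1) w q s = S.card ∧
          ∃ sstar : V → Fin c,
            welfare G (fun _ _ => True) (fun _ _ => 1) w q sstar =
              S.card + 2 * edgesIn G S := by
  classical
  set n := Fintype.card V with hn
  let e : V ≃ Fin n := Fintype.equivFin V
  refine ⟨n + 1, Nat.le_add_left 1 n, ?_⟩
  set w : V → V → ℝ := fun i j => if G.Adj i j ∧ i ∈ S ∧ j ∈ S then 2 else 0 with hw
  set s : V → Fin (n + 1) := fun i => (e i).succ with hs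
  set q : V → Fin (n + 1) → ℝ := fun i k => if i ∈ S ∧ (k = s i ∨ k = 0) then 1 else 0 with hq
  have hsinj : Function.Injective s := fun i j h => e.injective (Fin.succ_injective _ h)
  have hs0 : ∀ i, s i ≠ 0 := fun i => Fin.succ_ne_zero _
  have hwle : ∀ i j, w i j ≤ 2 := by
    intro i j; rw [hw]; dsimp only; split_ifs <;> norm_num
  have hw0 : ∀ i j, 0 ≤ w i j := by
    intro i j; rw [hw]; dsimp only; split_ifs <;> norm_num
  have hutil : ∀ i, util G (fun _ _ => True) (fun _ _ => 1) w q s i =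
      if i ∈ S then 1 else 0 := by
    intro i
    rw [util_true_one]
    have h1 : ∑ j ∈ G.neighborFinset i, (if s i = s j then w i j / 2 else 0) = 0 := by
      apply Finset.sum_eq_zero
      intro j hj
      rw [SimpleGraph.mem_neighborFinset] at hj
      exact if_neg fun h => (G.ne_of_adj hj) (hsinj h)
    rw [h1, add_zero, hq]
    simp
  refine ⟨w, q, hw0, ?_, ?_, s, ?_, ?_, fun _ => 0, ?_⟩
  · -- symmetry
    intro i j
    rw [hw]; dsimp only
    have : (G.Adj i j ∧ i ∈ S ∧ j ∈ S) ↔ (G.Adj j i ∧ j ∈ S ∧ i ∈ S) := by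
      rw [G.adj_comm]; tauto
    rw [if_congr this rfl rfl]
  · -- q nonneg
    intro i k
    rw [hq]; dsimp only; split_ifs <;> norm_num
  · -- Nash
    intro i k
    have hup : util G (fun _ _ => True) (fun _ _ => 1) w q (Function.update s i k) i =
        q i k + ∑ j ∈ G.neighborFinset i, if k = s j then w i j / 2 else 0 := by
      rw [util_true_one]
      congr 1
      · rw [Function.update_self]
      · apply Finset.sum_congr rfl
        intro j hj
        rw [SimpleGraph.mem_neighborFinset] at hj
        rw [Function.update_self, Function.update_of_ne (G.ne_of_adj hj).symm]
    rw [hup, hutil i]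
    by_cases hiS : i ∈ S
    · rw [if_pos hiS]
      by_cases hk : k = s i ∨ k = 0
      · have hq1 : q i k = 1 := by rw [hq]; exact if_pos ⟨hiS, hk⟩
        have hsum : ∑ j ∈ G.neighborFinset i, (if k = s j then w i j / 2 else 0) = 0 := by
          apply Finset.sum_eq_zero
          intro j hj
          rw [SimpleGraph.mem_neighborFinset] at hj
          refine if_neg fun h => ?_
          rcases hk with hk | hk
          · exact (G.ne_of_adj hj) (hsinj (hk ▸ h).symm).symm
          · exact hs0 j (hk ▸ h).symm
        rw [hq1, hsum]; norm_num
      · have hq0 : q i k = 0 := by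
          rw [hq]; exact if_neg fun h => hk h.2
        rw [hq0, zero_add]
        calc ∑ j ∈ G.neighborFinset i, (if k = s j then w i j / 2 else 0)
            ≤ ∑ j ∈ G.neighborFinset i, (if k = s j then (1 : ℝ) else 0) := by
              apply Finset.sum_le_sum
              intro j _
              split_ifs with h
              · linarith [hwle i j]
              · exact le_refl 0
          _ = ((G.neighborFinset i).filter fun j => k = s j).card := by
              rw [Finset.sum_boole]
          _ ≤ 1 := by
              norm_cast
              apply Finset.card_le_one.2
              intro a ha b hb
              rw [Finset.mem_filter] at ha hb
              exact hsinj ((ha.2).symm.trans hb.2)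
    · rw [if_neg hiS]
      have hq0 : q i k = 0 := by rw [hq]; exact if_neg fun h => hiS h.1
      have hsum : ∑ j ∈ G.neighborFinset i, (if k = s j then w i j / 2 else 0) = 0 := by
        apply Finset.sum_eq_zero
        intro j _
        have : w i j = 0 := by rw [hw]; exact if_neg fun h => hiS h.2.1
        rw [this]; simp
      rw [hq0, hsum]; norm_num
  · -- welfare s
    unfold welfare
    rw [Finset.sum_congr rfl fun i _ => hutil i, Finset.sum_ite_mem, Finset.univ_inter,
      Finset.sum_const, nsmul_eq_mul, mul_one]
  · -- welfare sstar
    unfold welfare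
    have hu : ∀ i, util G (fun _ _ => True) (fun _ _ => 1) w q (fun _ => (0 : Fin (n + 1))) i =
        (if i ∈ S then 1 else 0) + ∑ j ∈ G.neighborFinset i, w i j / 2 := by
      intro i
      rw [util_true_one, Finset.sum_congr rfl (fun j _ => if_pos rfl)]
      have h1 : q i ((fun _ => (0 : Fin (n + 1))) i) = if i ∈ S then 1 else 0 := by
        rw [hq]; simp [(hs0 i).symm]
      rw [h1]
    rw [Finset.sum_congr rfl fun i _ => hu i, Finset.sum_add_distrib,
      Finset.sum_ite_mem, Finset.univ_inter, Finset.sum_const, nsmul_eq_mul, mul_one]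
    congr 1
    rw [sum_neighbor_eq_sum_darts G (fun i j => w i j / 2)]
    have hfd : ∀ d : G.Dart, w d.fst d.snd / 2 =
        (fun e : Sym2 V => if ∀ v ∈ e, v ∈ S then (1 : ℝ) else 0) d.edge := by
      intro d
      have had := d.adj
      dsimp only
      by_cases h : d.fst ∈ S ∧ d.snd ∈ S
      · rw [hw]; dsimp only
        rw [if_pos ⟨had, h⟩, if_pos]
        · norm_num
        · intro v hv
          rw [SimpleGraph.Dart.edge, Sym2.mem_iff] at hv
          rcases hv with hv | hv
          · exact hv ▸ h.1
          · exact hv ▸ h.2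
      · rw [hw]; dsimp only
        rw [if_neg fun hh => h hh.2, if_neg]
        · norm_num
        · intro hall
          exact h ⟨hall _ (by rw [SimpleGraph.Dart.edge, Sym2.mem_iff]; left; rfl),
            hall _ (by rw [SimpleGraph.Dart.edge, Sym2.mem_iff]; right; rfl)⟩
    rw [Finset.sum_congr rfl fun d _ => hfd d,
      sum_darts_edge G (fun e : Sym2 V => if ∀ v ∈ e, v ∈ S then (1 : ℝ) else 0)]
    have : ∀ e ∈ G.edgeFinset, 2 * (if ∀ v ∈ e, v ∈ S then (1 : ℝ) else 0) =
        2 * (if ∀ v ∈ e, v ∈ S then (1 : ℝ) else 0) := fun _ _ => rfl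
    rw [← Finset.mul_sum, Finset.sum_boole]
    unfold edgesIn
    norm_num
end

section
/- Let Γ be a symmetric clustering game on a finite simple graph G = (V, E_c ∪ E_a) with c ≥ 2 colors and the equal-split distribution rule. Then for every pure Nash equilibrium s and every strategy profile s*, u(s*) ≤ (5 + 2·ρ(G[E_c]))·u(s), where G[E_c] is the subgraph of G whose edge set consists of the coordination edges only. -/
open Finset
open scoped Classical

variable {V : Type*}

lemma aux_pairs [Fintype V] (H : SimpleGraph V) (F : V → V → ℝ) :
    ∑ i, ∑ j ∈ H.neighborFinset i, F i j
      = ∑ p ∈ Finset.univ.filter (fun p : V × V => H.Adj p.1 p.2), F p.1 p.2 := by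
  rw [Finset.sum_filter, Fintype.sum_prod_type]
  refine Finset.sum_congr rfl fun i _ => ?_
  rw [SimpleGraph.neighborFinset_eq_filter, Finset.sum_filter]

lemma aux_swap [Fintype V] (H : SimpleGraph V) (F : V → V → ℝ) :
    ∑ i, ∑ j ∈ H.neighborFinset i, F i j = ∑ i, ∑ j ∈ H.neighborFinset i, F j i := by
  rw [aux_pairs, aux_pairs]
  refine Finset.sum_equiv (Equiv.prodComm V V) (fun p => ?_) (fun p hp => ?_)
  · simp [SimpleGraph.adj_comm]
  · rfl

lemma aux_two_sum [Fintype V] (H : SimpleGraph V) (g : Sym2 V → ℝ) :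
    ∑ i, ∑ j ∈ H.neighborFinset i, g s(i, j) = 2 * ∑ e ∈ H.edgeFinset, g e := by
  classical
  rw [aux_pairs]
  rw [← Finset.sum_fiberwise_of_maps_to (g := fun p : V × V => s(p.1, p.2))
    (t := H.edgeFinset) (fun p hp => by
      simp only [Finset.mem_filter] at hp
      simpa [SimpleGraph.mem_edgeFinset] using hp.2) (fun p : V × V => g s(p.1, p.2))]
  rw [Finset.mul_sum]
  refine Finset.sum_congr rfl fun e he => ?_
  revert he
  refine Sym2.ind (fun a b he => ?_) e
  have hab : H.Adj a b := by simpa [SimpleGraph.mem_edgeFinset] using he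
  have hfib : ((Finset.univ.filter fun p : V × V => H.Adj p.1 p.2).filter
      (fun p : V × V => s(p.1, p.2) = s(a, b))) = {(a, b), (b, a)} := by
    ext p
    simp only [Finset.mem_filter, Finset.mem_univ, true_and, Finset.mem_insert,
      Finset.mem_singleton]
    constructor
    · rintro ⟨hadj, hmk⟩
      rw [Sym2.eq_iff] at hmk
      rcases hmk with ⟨h1, h2⟩ | ⟨h1, h2⟩
      · left; ext <;> simp [h1, h2]
      · right; ext <;> simp [h1, h2]
    · rintro (rfl | rfl)
      · exact ⟨hab, rfl⟩
      · exact ⟨hab.symm, Sym2.eq_swap⟩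
  rw [hfib, Finset.sum_pair (by simp [hab.ne] : ((a,b) : V × V) ≠ (b,a))]
  rw [show s(b, a) = s(a,b) from Sym2.eq_swap]
  show g s(a,b) + g s(a,b) = 2 * g s(a,b)
  ring

lemma maxDensity_nonneg [Fintype V] (Gc : SimpleGraph V) : 0 ≤ maxDensity Gc := by
  by_cases h : Nonempty V
  · obtain ⟨v⟩ := h
    have hb : BddAbove (Set.range fun S : {S : Finset V // S.Nonempty} =>
        (edgesIn Gc S.1 : ℝ) / (S.1.card : ℝ)) := Set.Finite.bddAbove (Set.finite_range _)
    refine le_trans ?_ (le_ciSup hb ⟨{v}, Finset.singleton_nonempty v⟩)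
    positivity
  · rw [maxDensity]
    have : IsEmpty {S : Finset V // S.Nonempty} :=
      ⟨fun S => h ⟨S.2.choose⟩⟩
    rw [iSup_of_empty']
    simp [Real.sSup_empty]

lemma edgesIn_empty [Fintype V] (Gc : SimpleGraph V) :
    Gc.edgeFinset.filter (fun e => ∀ v ∈ e, v ∈ (∅ : Finset V)) = ∅ := by
  rw [Finset.filter_eq_empty_iff]
  intro e he
  revert he
  refine Sym2.ind (fun a b he h => ?_) e
  exact absurd (h a (by simp)) (Finset.notMem_empty a)

lemma edgesIn_le [Fintype V] (Gc : SimpleGraph V) (S : Finset V) :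
    (edgesIn Gc S : ℝ) ≤ maxDensity Gc * S.card := by
  rcases S.eq_empty_or_nonempty with rfl | hS
  · have h0 : edgesIn Gc (∅ : Finset V) = 0 := by
      rw [edgesIn, edgesIn_empty, Finset.card_empty]
    simp [h0]
  · have hb : BddAbove (Set.range fun S : {S : Finset V // S.Nonempty} =>
        (edgesIn Gc S.1 : ℝ) / (S.1.card : ℝ)) := Set.Finite.bddAbove (Set.finite_range _)
    have hle : (edgesIn Gc S : ℝ) / (S.card : ℝ) ≤ maxDensity Gc :=
      le_ciSup hb ⟨S, hS⟩
    have hpos : (0 : ℝ) < (S.card : ℝ) := by exact_mod_cast hS.card_pos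
    calc (edgesIn Gc S : ℝ) = (edgesIn Gc S : ℝ) / (S.card : ℝ) * (S.card : ℝ) := by
          field_simp
      _ ≤ maxDensity Gc * S.card := mul_le_mul_of_nonneg_right hle hpos.le

lemma density_aux [Fintype V] (Gc : SimpleGraph V) :
    ∀ n : ℕ, ∀ S : Finset V, S.card ≤ n → ∀ (W : Sym2 V → ℝ) (f : V → ℝ),
      (∀ v, 0 ≤ f v) → (∀ e ∈ Gc.edgeFinset, ∀ v ∈ e, W e ≤ f v) →
      ∑ e ∈ Gc.edgeFinset.filter (fun e => ∀ v ∈ e, v ∈ S), W e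
        ≤ maxDensity Gc * ∑ v ∈ S, f v := by
  intro n
  induction n with
  | zero =>
    intro S hS W f hf hWf
    have : S = ∅ := Finset.card_eq_zero.mp (le_antisymm hS (Nat.zero_le _))
    subst this
    rw [edgesIn_empty]
    simp
  | succ n ih =>
    intro S hS W f hf hWf
    rcases S.eq_empty_or_nonempty with rfl | hne
    · exact ih ∅ (by simp) W f hf hWf
    have hρ : 0 ≤ maxDensity Gc := maxDensity_nonneg Gc
    set m := S.inf' hne f with hm
    have hm0 : 0 ≤ m := Finset.le_inf' hne f (fun v _ => hf v)
    obtain ⟨v0, hv0S, hv0⟩ := Finset.exists_mem_eq_inf' hne f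
    set W' : Sym2 V → ℝ := fun e => max (W e - m) 0 with hW'
    set f' : V → ℝ := fun v => max (f v - m) 0 with hf'
    set S' := S.filter (fun v => m < f v) with hS'def
    have hsub : S' ⊆ S := Finset.filter_subset _ _
    have hv0notS' : v0 ∉ S' := by
      simp only [hS'def, Finset.mem_filter, not_and, not_lt]
      intro _; rw [← hv0, hm]
    have hcard : S'.card ≤ n := by
      have : S'.card < S.card :=
        Finset.card_lt_card ⟨hsub, fun hsup => hv0notS' (hsup hv0S)⟩
      omega
    have hfm : ∀ v ∈ S, m ≤ f v := fun v hv => Finset.inf'_le f hv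
    have key1 : ∑ e ∈ Gc.edgeFinset.filter (fun e => ∀ v ∈ e, v ∈ S), W e
        ≤ (∑ e ∈ Gc.edgeFinset.filter (fun e => ∀ v ∈ e, v ∈ S), W' e)
          + m * (edgesIn Gc S) := by
      rw [edgesIn]
      calc ∑ e ∈ Gc.edgeFinset.filter (fun e => ∀ v ∈ e, v ∈ S), W e
          ≤ ∑ e ∈ Gc.edgeFinset.filter (fun e => ∀ v ∈ e, v ∈ S), (W' e + m) :=
            Finset.sum_le_sum (fun e _ => by
              have h1 := le_max_left (W e - m) 0
              simp only [hW']; linarith)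
        _ = (∑ e ∈ Gc.edgeFinset.filter (fun e => ∀ v ∈ e, v ∈ S), W' e)
            + m * ((Gc.edgeFinset.filter (fun e => ∀ v ∈ e, v ∈ S)).card) := by
            rw [Finset.sum_add_distrib, Finset.sum_const, nsmul_eq_mul]
            ring
    have key2 : ∑ e ∈ Gc.edgeFinset.filter (fun e => ∀ v ∈ e, v ∈ S), W' e
        ≤ ∑ e ∈ Gc.edgeFinset.filter (fun e => ∀ v ∈ e, v ∈ S'), W' e := by
      rw [← Finset.sum_filter_ne_zero (Gc.edgeFinset.filter (fun e => ∀ v ∈ e, v ∈ S))]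
      refine Finset.sum_le_sum_of_subset_of_nonneg ?_ (fun e _ _ => le_max_right _ _)
      intro e he
      obtain ⟨h1, hne0⟩ := Finset.mem_filter.mp he
      obtain ⟨heE, heS⟩ := Finset.mem_filter.mp h1
      rw [Finset.mem_filter]
      refine ⟨heE, fun v hv => ?_⟩
      have hWm : m < W e := by
        by_contra hcon
        push_neg at hcon
        apply hne0
        simp only [hW', max_eq_right (by linarith : W e - m ≤ 0)]
      rw [hS'def, Finset.mem_filter]
      exact ⟨heS v hv, lt_of_lt_of_le hWm (hWf e heE v hv)⟩
    have key3 : ∑ e ∈ Gc.edgeFinset.filter (fun e => ∀ v ∈ e, v ∈ S'), W' e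
        ≤ maxDensity Gc * ∑ v ∈ S', f' v :=
      ih S' hcard W' f' (fun v => le_max_right _ _)
        (fun e he v hv => max_le_max (sub_le_sub_right (hWf e he v hv) m) le_rfl)
    have key4 : ∑ v ∈ S', f' v ≤ (∑ v ∈ S, f v) - m * S.card := by
      have h1 : ∑ v ∈ S', f' v = ∑ v ∈ S', (f v - m) := by
        refine Finset.sum_congr rfl fun v hv => ?_
        have : m < f v := (Finset.mem_filter.mp hv).2
        simp only [hf']
        exact max_eq_left (by linarith)
      have h2 : ∑ v ∈ S', (f v - m) ≤ ∑ v ∈ S, (f v - m) :=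
        Finset.sum_le_sum_of_subset_of_nonneg hsub
          (fun v hv _ => by have := hfm v hv; linarith)
      have h3 : ∑ v ∈ S, (f v - m) = (∑ v ∈ S, f v) - m * S.card := by
        rw [Finset.sum_sub_distrib, Finset.sum_const, nsmul_eq_mul]
        ring
      linarith
    have key5 : (edgesIn Gc S : ℝ) ≤ maxDensity Gc * S.card := edgesIn_le Gc S
    have h6 : m * (edgesIn Gc S : ℝ) ≤ m * (maxDensity Gc * S.card) :=
      mul_le_mul_of_nonneg_left key5 hm0
    have h7 : maxDensity Gc * (∑ v ∈ S', f' v)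
        ≤ maxDensity Gc * ((∑ v ∈ S, f v) - m * S.card) :=
      mul_le_mul_of_nonneg_left key4 hρ
    have := edgesIn Gc S
    calc ∑ e ∈ Gc.edgeFinset.filter (fun e => ∀ v ∈ e, v ∈ S), W e
        ≤ (∑ e ∈ Gc.edgeFinset.filter (fun e => ∀ v ∈ e, v ∈ S), W' e)
          + m * (edgesIn Gc S) := key1
      _ ≤ maxDensity Gc * ∑ v ∈ S, f v := by nlinarith [key2, key3]

lemma ite_nonneg' (P : Prop) [Decidable P] (x : ℝ) (hx : 0 ≤ x) :
    0 ≤ if P then x else 0 := by split <;> simp [hx]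


theorem stmt6 [Fintype V] (G Gc : SimpleGraph V) (coord : V → V → Prop)
    (hcoord : ∀ i j, coord i j ↔ coord j i)
    (hGc : ∀ i j, Gc.Adj i j ↔ G.Adj i j ∧ coord i j)
    (c : ℕ) (hc : 2 ≤ c)
    (w : V → V → ℝ) (q : V → Fin c → ℝ)
    (hw : ∀ i j, 0 ≤ w i j) (hwsymm : ∀ i j, w i j = w j i)
    (hq : ∀ i k, 0 ≤ q i k)
    (s sstar : V → Fin c)
    (hs : IsNash G coord (fun _ _ => 1) w q s) :
    welfare G coord (fun _ _ => 1) w q sstar ≤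
      (5 + 2 * maxDensity Gc) * welfare G coord (fun _ _ => 1) w q s := by
  classical
  have hw2 : ∀ i j, (0:ℝ) ≤ w i j / 2 := fun i j => by linarith [hw i j]
  -- utility in normalized form
  have hutil : ∀ (t : V → Fin c) i, util G coord (fun _ _ => 1) w q t i
      = q i (t i) + ∑ j ∈ G.neighborFinset i,
          (if (coord i j ∧ t i = t j) ∨ (¬ coord i j ∧ t i ≠ t j)
           then w i j / 2 else 0) := by
    intro t i
    rw [util]
    congr 1
    refine Finset.sum_congr rfl fun j _ => ?_
    split <;> ring
  have hdev : ∀ (i : V) (k : Fin c),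
      util G coord (fun _ _ => 1) w q (Function.update s i k) i
      = q i k + ∑ j ∈ G.neighborFinset i,
          (if (coord i j ∧ k = s j) ∨ (¬ coord i j ∧ k ≠ s j)
           then w i j / 2 else 0) := by
    intro i k
    rw [hutil, Function.update_self]
    congr 1
    refine Finset.sum_congr rfl fun j hj => ?_
    have hji : j ≠ i := fun h =>
      (G.ne_of_adj ((SimpleGraph.mem_neighborFinset _ _ _).mp hj)) h.symm
    rw [Function.update_of_ne hji]
  set u : V → ℝ := fun i => util G coord (fun _ _ => 1) w q s i with hudef
  set usum : ℝ := welfare G coord (fun _ _ => 1) w q s with husumdef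
  have husum : usum = ∑ i, u i := rfl
  have hu0 : ∀ i, 0 ≤ u i := by
    intro i
    rw [hudef]
    simp only
    rw [hutil]
    have := hq i (s i)
    have hsum : (0:ℝ) ≤ ∑ j ∈ G.neighborFinset i,
        (if (coord i j ∧ s i = s j) ∨ (¬ coord i j ∧ s i ≠ s j)
         then w i j / 2 else 0) :=
      Finset.sum_nonneg fun j _ => ite_nonneg' _ _ (hw2 i j)
    linarith
  have husum0 : 0 ≤ usum := by
    rw [husum]; exact Finset.sum_nonneg fun i _ => hu0 i
  -- (N2)
  have hN2 : ∀ i j, G.Adj i j → coord i j → w i j ≤ 2 * u i := by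
    intro i j hadj hcij
    have h := hs i (s j)
    rw [hdev] at h
    have hmem : j ∈ G.neighborFinset i := (SimpleGraph.mem_neighborFinset _ _ _).mpr hadj
    have hterm : w i j / 2
        ≤ ∑ j' ∈ G.neighborFinset i,
            (if (coord i j' ∧ s j = s j') ∨ (¬ coord i j' ∧ s j ≠ s j')
             then w i j' / 2 else 0) := by
      have h1 : w i j / 2
          = if (coord i j ∧ s j = s j) ∨ (¬ coord i j ∧ s j ≠ s j)
            then w i j / 2 else 0 := by
        rw [if_pos (Or.inl ⟨hcij, rfl⟩)]
      rw [h1]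
      exact Finset.single_le_sum (f := fun j' => if (coord i j' ∧ s j = s j') ∨ (¬ coord i j' ∧ s j ≠ s j') then w i j' / 2 else 0) (fun j' _ => ite_nonneg' _ _ (hw2 i j')) hmem
    have hq' := hq i (s j)
    have : w i j / 2 ≤ u i := by rw [hudef]; simp only; linarith
    linarith
  -- (N1)
  have hN1 : ∀ i, q i (sstar i) + ∑ j ∈ G.neighborFinset i,
      (if ¬ coord i j ∧ sstar i ≠ s j then w i j / 2 else 0) ≤ u i := by
    intro i
    have h := hs i (sstar i)
    rw [hdev] at h
    refine le_trans (add_le_add_right (Finset.sum_le_sum fun j _ => ?_) _) h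
    by_cases h1 : ¬ coord i j ∧ sstar i ≠ s j
    · rw [if_pos h1, if_pos (Or.inr h1)]
    · rw [if_neg h1]; exact ite_nonneg' _ _ (hw2 i j)
  set Qstar : ℝ := ∑ i, q i (sstar i) with hQstar
  set D : ℝ := ∑ i, ∑ j ∈ G.neighborFinset i,
      (if ¬ coord i j ∧ sstar i ≠ s j then w i j / 2 else 0) with hD
  have hQ0 : 0 ≤ Qstar := Finset.sum_nonneg fun i _ => hq i (sstar i)
  have hQD : Qstar + D ≤ usum := by
    rw [hQstar, hD, husum, ← Finset.sum_add_distrib]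
    exact Finset.sum_le_sum fun i _ => hN1 i
  set Cstar : ℝ := ∑ i, ∑ j ∈ G.neighborFinset i,
      (if coord i j ∧ sstar i = sstar j then w i j / 2 else 0) with hCstar
  set Astar : ℝ := ∑ i, ∑ j ∈ G.neighborFinset i,
      (if ¬ coord i j ∧ sstar i ≠ sstar j then w i j / 2 else 0) with hAstar
  -- welfare of sstar decomposition
  have hwstar : welfare G coord (fun _ _ => 1) w q sstar = Qstar + (Cstar + Astar) := by
    rw [welfare, hQstar, hCstar, hAstar]
    rw [← Finset.sum_add_distrib, ← Finset.sum_add_distrib]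
    refine Finset.sum_congr rfl fun i _ => ?_
    rw [hutil]
    congr 1
    rw [← Finset.sum_add_distrib]
    refine Finset.sum_congr rfl fun j _ => ?_
    by_cases hc1 : coord i j <;> by_cases he : sstar i = sstar j <;> simp [hc1, he]
  -- Es
  have hEs : ∑ i, ∑ j ∈ G.neighborFinset i,
      (if ¬ coord i j ∧ s i ≠ s j then w i j / 2 else 0) ≤ usum := by
    rw [husum]
    refine Finset.sum_le_sum fun i _ => ?_
    rw [hudef]
    simp only
    rw [hutil]
    have := hq i (s i)
    have hle : ∑ j ∈ G.neighborFinset i,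
        (if ¬ coord i j ∧ s i ≠ s j then w i j / 2 else 0)
        ≤ ∑ j ∈ G.neighborFinset i,
          (if (coord i j ∧ s i = s j) ∨ (¬ coord i j ∧ s i ≠ s j)
           then w i j / 2 else 0) := by
      refine Finset.sum_le_sum fun j _ => ?_
      by_cases h1 : ¬ coord i j ∧ s i ≠ s j
      · rw [if_pos h1, if_pos (Or.inr h1)]
      · rw [if_neg h1]; exact ite_nonneg' _ _ (hw2 i j)
    linarith
  -- Astar bound
  have hA : Astar ≤ 2 * D + usum := by
    have hD2 : ∑ i, ∑ j ∈ G.neighborFinset i,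
        (if ¬ coord i j ∧ sstar j ≠ s i then w i j / 2 else 0) = D := by
      rw [hD]
      rw [aux_swap G (fun a b => if ¬ coord a b ∧ sstar a ≠ s b then w a b / 2 else 0)]
      refine Finset.sum_congr rfl fun i _ => Finset.sum_congr rfl fun j _ => ?_
      rw [hwsymm j i]
      exact if_congr (and_congr_left' (not_congr (hcoord i j))) rfl rfl
    have hstep : Astar ≤ D
        + (∑ i, ∑ j ∈ G.neighborFinset i,
            (if ¬ coord i j ∧ sstar j ≠ s i then w i j / 2 else 0))
        + (∑ i, ∑ j ∈ G.neighborFinset i,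
            (if ¬ coord i j ∧ s i ≠ s j then w i j / 2 else 0)) := by
      rw [hAstar, hD, ← Finset.sum_add_distrib, ← Finset.sum_add_distrib]
      refine Finset.sum_le_sum fun i _ => ?_
      rw [← Finset.sum_add_distrib, ← Finset.sum_add_distrib]
      refine Finset.sum_le_sum fun j _ => ?_
      have t1 := ite_nonneg' (¬ coord i j ∧ sstar i ≠ s j) _ (hw2 i j)
      have t2 := ite_nonneg' (¬ coord i j ∧ sstar j ≠ s i) _ (hw2 i j)
      have t3 := ite_nonneg' (¬ coord i j ∧ s i ≠ s j) _ (hw2 i j)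
      by_cases h : ¬ coord i j ∧ sstar i ≠ sstar j
      · rw [if_pos h]
        obtain ⟨hnc, hne⟩ := h
        by_cases h1 : sstar i ≠ s j
        · rw [if_pos ⟨hnc, h1⟩]; linarith
        · push_neg at h1
          by_cases h2 : sstar j ≠ s i
          · rw [if_pos (show ¬ coord i j ∧ sstar j ≠ s i from ⟨hnc, h2⟩)]; linarith
          · push_neg at h2
            have h3 : s i ≠ s j := fun hcon => hne ((h1.trans hcon.symm).trans h2.symm)
            rw [if_pos (show ¬ coord i j ∧ s i ≠ s j from ⟨hnc, h3⟩)]; linarith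
      · rw [if_neg h]; linarith
    rw [hD2] at hstep
    linarith [hEs]
  -- Cstar bound
  have hC : Cstar ≤ 2 * (maxDensity Gc * usum) := by
    have hNbr : ∀ i, Gc.neighborFinset i
        = (G.neighborFinset i).filter (fun j => coord i j) := by
      intro i
      ext j
      simp [SimpleGraph.mem_neighborFinset, hGc]
    have h1 : Cstar ≤ ∑ i, ∑ j ∈ Gc.neighborFinset i, w i j / 2 := by
      rw [hCstar]
      refine Finset.sum_le_sum fun i _ => ?_
      rw [hNbr i, Finset.sum_filter]
      refine Finset.sum_le_sum fun j _ => ?_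
      by_cases hc1 : coord i j ∧ sstar i = sstar j
      · rw [if_pos hc1, if_pos hc1.1]
      · rw [if_neg hc1]; exact ite_nonneg' _ _ (hw2 i j)
    set Wl : Sym2 V → ℝ := Sym2.lift ⟨w, fun a b => hwsymm a b⟩ with hWl
    have h2 : ∑ i, ∑ j ∈ Gc.neighborFinset i, w i j / 2
        = 2 * ∑ e ∈ Gc.edgeFinset, Wl e / 2 := by
      rw [← aux_two_sum Gc (fun e => Wl e / 2)]
      refine Finset.sum_congr rfl fun i _ => Finset.sum_congr rfl fun j _ => ?_
      rw [hWl]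
      simp [Sym2.lift_mk]
    have h3 : 2 * ∑ e ∈ Gc.edgeFinset, Wl e / 2 = ∑ e ∈ Gc.edgeFinset, Wl e := by
      rw [Finset.mul_sum]
      refine Finset.sum_congr rfl fun e _ => by ring
    have hWf : ∀ e ∈ Gc.edgeFinset, ∀ v ∈ e, Wl e ≤ 2 * u v := by
      intro e he
      revert he
      refine Sym2.ind (fun a b he v hv => ?_) e
      have hadj : Gc.Adj a b := by rwa [SimpleGraph.mem_edgeFinset] at he
      obtain ⟨hGadj, hcab⟩ := (hGc a b).mp hadj
      have hWab : Wl s(a, b) = w a b := by rw [hWl]; simp [Sym2.lift_mk]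
      rcases Sym2.mem_iff.mp hv with rfl | rfl
      · rw [hWab]; exact hN2 v b hGadj hcab
      · rw [hWab, hwsymm a v]
        exact hN2 v a hGadj.symm ((hcoord a v).mp hcab)
    have hfilter : Gc.edgeFinset.filter (fun e => ∀ v ∈ e, v ∈ (Finset.univ : Finset V))
        = Gc.edgeFinset :=
      Finset.filter_true_of_mem fun e _ => fun v _ => Finset.mem_univ v
    have h4 := density_aux Gc (Finset.univ : Finset V).card Finset.univ le_rfl Wl
      (fun v => 2 * u v) (fun v => mul_nonneg (by norm_num) (hu0 v)) hWf
    rw [hfilter] at h4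
    have h5 : ∑ v, 2 * u v = 2 * usum := by
      rw [husum, Finset.mul_sum]
    rw [h5] at h4
    calc Cstar ≤ ∑ i, ∑ j ∈ Gc.neighborFinset i, w i j / 2 := h1
      _ = ∑ e ∈ Gc.edgeFinset, Wl e := by rw [h2, h3]
      _ ≤ maxDensity Gc * (2 * usum) := h4
      _ = 2 * (maxDensity Gc * usum) := by ring
  -- combine
  have hD0 : 0 ≤ D := Finset.sum_nonneg fun i _ =>
    Finset.sum_nonneg fun j _ => ite_nonneg' _ _ (hw2 i j)
  have hfin : (5 + 2 * maxDensity Gc) * usum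
      = 5 * usum + 2 * (maxDensity Gc * usum) := by ring
  rw [hwstar, hfin]
  linarith
end

section
/- Let Γ be a symmetric clustering game on a finite simple graph G = (V, E_c ∪ E_a) with c ≥ 2 colors and the equal-split distribution rule, and let s be a pure Nash equilibrium of Γ. Then the total weight of all anti-coordination edges satisfies Σ_{e ∈ E_a} w_e ≤ 4·Σ_{i∈V} u_i(s). -/
open Finset
open scoped Classical

variable {V : Type*}

theorem stmt7 [Fintype V] (G : SimpleGraph V) (coord : V → V → Prop)
    (hcoord : ∀ i j, coord i j ↔ coord j i)
    (c : ℕ) (hc : 2 ≤ c)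
    (w : V → V → ℝ) (q : V → Fin c → ℝ)
    (hw : ∀ i j, 0 ≤ w i j) (hwsymm : ∀ i j, w i j = w j i)
    (hq : ∀ i k, 0 ≤ q i k)
    (s : V → Fin c)
    (hs : IsNash G coord (fun _ _ => 1) w q s) :
    (1 / 2) * ∑ i, ∑ j ∈ G.neighborFinset i, (if coord i j then 0 else w i j) ≤
      4 * ∑ i, util G coord (fun _ _ => 1) w q s i := by

  have hui : ∀ i, 0 ≤ util G coord (fun _ _ => 1) w q s i := by
    intro i
    unfold util
    apply add_nonneg (hq i _)
    apply Finset.sum_nonneg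
    intro j hj
    split
    · have := hw i j; positivity
    · exact le_refl 0
  have key : ∀ i, ∑ j ∈ G.neighborFinset i, (if coord i j then 0 else w i j)
      ≤ 4 * util G coord (fun _ _ => 1) w q s i := by
    intro i
    set u := util G coord (fun _ _ => 1) w q s i with hu
    have h1 : ∑ k : Fin c, util G coord (fun _ _ => 1) w q (Function.update s i k) i
        ≤ (c : ℝ) * u := by
      calc ∑ k : Fin c, util G coord (fun _ _ => 1) w q (Function.update s i k) i
          ≤ ∑ _k : Fin c, u := Finset.sum_le_sum fun k _ => hs i k
        _ = (c : ℝ) * u := by simp [mul_comm]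
    have hutil : ∀ k : Fin c, util G coord (fun _ _ => 1) w q (Function.update s i k) i
        = q i k + ∑ j ∈ G.neighborFinset i,
          (if (coord i j ∧ k = s j) ∨ (¬ coord i j ∧ k ≠ s j) then (1/2) * w i j else 0) := by
      intro k
      unfold util
      congr 1
      · rw [Function.update_self]
      apply Finset.sum_congr rfl
      intro j hj
      have hadj : G.Adj i j := by simpa using hj
      have hji : j ≠ i := fun h => (G.ne_of_adj hadj) h.symm
      rw [Function.update_self, Function.update_of_ne hji]
      norm_num
    have h2 : ((c : ℝ) - 1) / 2 * ∑ j ∈ G.neighborFinset i, (if coord i j then 0 else w i j)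
        ≤ ∑ k : Fin c, util G coord (fun _ _ => 1) w q (Function.update s i k) i := by
      have hrw : ∑ k : Fin c, util G coord (fun _ _ => 1) w q (Function.update s i k) i
          = ∑ k : Fin c, q i k + ∑ j ∈ G.neighborFinset i, ∑ k : Fin c,
            (if (coord i j ∧ k = s j) ∨ (¬ coord i j ∧ k ≠ s j) then (1/2) * w i j else 0) := by
        rw [← Finset.sum_comm, ← Finset.sum_add_distrib]
        exact Finset.sum_congr rfl fun k _ => hutil k
      rw [hrw, Finset.mul_sum]
      have hqnn : (0:ℝ) ≤ ∑ k : Fin c, q i k := Finset.sum_nonneg fun k _ => hq i k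
      refine le_add_of_nonneg_of_le hqnn (Finset.sum_le_sum ?_)
      intro j hj
      by_cases hcj : coord i j
      · simp only [hcj, if_true, mul_zero]
        apply Finset.sum_nonneg
        intro k _
        split
        · have := hw i j; positivity
        · exact le_refl 0
      · rw [if_neg hcj]
        have hcond : ∀ k : Fin c,
            (if (coord i j ∧ k = s j) ∨ (¬ coord i j ∧ k ≠ s j) then (1/2) * w i j else 0)
            = (1/2) * w i j - (if k = s j then (1/2) * w i j else 0) := by
          intro k
          by_cases h : k = s j <;> simp [h, hcj]
        rw [Finset.sum_congr rfl fun k _ => hcond k, Finset.sum_sub_distrib,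
          Finset.sum_const, Finset.sum_ite_eq' Finset.univ (s j)]
        simp only [Finset.mem_univ, if_true, Finset.card_univ, Fintype.card_fin, nsmul_eq_mul]
        ring_nf
        nlinarith [hw i j]
    have hc1 : (1:ℝ) ≤ (c : ℝ) - 1 := by
      have : (2:ℝ) ≤ (c:ℝ) := by exact_mod_cast hc
      linarith
    have h3 : (c : ℝ) * u ≤ ((c : ℝ) - 1) / 2 * (4 * u) := by
      have : (2:ℝ) ≤ (c:ℝ) := by exact_mod_cast hc
      nlinarith [hui i]
    have h4 := le_trans h2 (le_trans h1 h3)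
    have hpos : (0:ℝ) < ((c : ℝ) - 1) / 2 := by linarith
    exact le_of_mul_le_mul_left (by linarith [h4]) hpos
  have hsum : ∑ i, ∑ j ∈ G.neighborFinset i, (if coord i j then 0 else w i j)
      ≤ 4 * ∑ i, util G coord (fun _ _ => 1) w q s i := by
    rw [Finset.mul_sum]
    exact Finset.sum_le_sum fun i _ => key i
  have hnn : (0:ℝ) ≤ ∑ i, ∑ j ∈ G.neighborFinset i, (if coord i j then 0 else w i j) := by
    apply Finset.sum_nonneg; intro i _
    apply Finset.sum_nonneg; intro j _
    split
    · exact le_refl 0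
    · exact hw i j
  linarith
end

section
/- Let G = (V,E) be a finite simple graph, let M ⊆ E be a matching of size q ≥ 1 with set of matched vertices V_M, and let c ≥ q. Then there exist nonnegative edge weights w such that the symmetric coordination game on G with c colors, equal-split distribution rule and zero individual preferences has a pure Nash equilibrium s with u(s) > 0 and a strategy profile s* with u(s*)/u(s) ≥ |E[V_M]|/(2q), where E[V_M] is the set of edges of G with both endpoints in V_M. -/
open Finset
open scoped Classical

variable {V : Type*}

lemma util_eq [Fintype V] (G : SimpleGraph V) (w : V → V → ℝ) {c : ℕ} (s : V → Fin c) (i : V) :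
    util G (fun _ _ => True) (fun _ _ => 1) w (fun _ _ => 0) s i
      = ∑ j ∈ G.neighborFinset i, if s i = s j then w i j / 2 else 0 := by
  unfold util
  rw [zero_add]
  apply Finset.sum_congr rfl
  intro j _
  simp only [true_and, not_true, false_and, or_false]
  split_ifs
  · ring
  · rfl

lemma dart_sum [Fintype V] (G : SimpleGraph V) (F : V → V → ℝ) :
    ∑ d : G.Dart, F d.fst d.snd = ∑ i, ∑ j ∈ G.neighborFinset i, F i j := by
  classical
  let eqv : G.Dart ≃ Σ v : V, G.neighborSet v :=
    { toFun := fun d => ⟨d.fst, d.snd, d.adj⟩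
      invFun := fun s => ⟨(s.1, s.2), s.2.2⟩
      left_inv := fun d => by ext <;> rfl
      right_inv := fun s => rfl }
  rw [← Equiv.sum_comp eqv.symm (fun d => F d.fst d.snd), ← Finset.univ_sigma_univ,
    Finset.sum_sigma]
  apply Finset.sum_congr rfl
  intro i _
  have : ∑ s : G.neighborSet i, F i s = ∑ j ∈ G.neighborFinset i, F i j := by
    rw [SimpleGraph.neighborFinset_def, ← Finset.sum_set_coe]
  exact this

lemma sum_nbr_ge [Fintype V] (G : SimpleGraph V) (S : Finset V) (F : V → V → ℝ)
    (hnn : ∀ i j, 0 ≤ F i j)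
    (h1 : ∀ i j, G.Adj i j → i ∈ S → j ∈ S → 1 ≤ F i j + F j i) :
    (edgesIn G S : ℝ) ≤ ∑ i, ∑ j ∈ G.neighborFinset i, F i j := by
  classical
  rw [← dart_sum]
  rw [← Finset.sum_fiberwise_of_maps_to (g := SimpleGraph.Dart.edge) (t := G.edgeFinset)
    (fun d _ => by rw [SimpleGraph.mem_edgeFinset]; exact d.edge_mem)
    (fun d => F d.fst d.snd)]
  have hsub : (G.edgeFinset.filter fun e => ∀ v ∈ e, v ∈ S) ⊆ G.edgeFinset :=
    Finset.filter_subset _ _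
  calc (edgesIn G S : ℝ)
      = ∑ e ∈ G.edgeFinset.filter (fun e => ∀ v ∈ e, v ∈ S), (1:ℝ) := by
        simp [edgesIn]
    _ ≤ ∑ e ∈ G.edgeFinset.filter (fun e => ∀ v ∈ e, v ∈ S),
          ∑ d ∈ Finset.univ.filter (fun d : G.Dart => d.edge = e), F d.fst d.snd := by
        apply Finset.sum_le_sum
        intro e he
        rw [Finset.mem_filter, SimpleGraph.mem_edgeFinset] at he
        obtain ⟨he, hS⟩ := he
        induction' e with a b
        have hadj : G.Adj a b := he
        let d : G.Dart := ⟨(a, b), hadj⟩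
        have hfib : (Finset.univ.filter (fun d' : G.Dart => d'.edge = d.edge)) = {d, d.symm} :=
          SimpleGraph.Dart.edge_fiber d
        have hde : d.edge = Sym2.mk a b := rfl
        rw [← hde, hfib, Finset.sum_insert
          (by simp only [Finset.mem_singleton]; exact d.symm_ne.symm),
          Finset.sum_singleton]
        have : 1 ≤ F a b + F b a :=
          h1 a b hadj (hS a (by simp)) (hS b (by simp))
        simpa using this
    _ ≤ ∑ e ∈ G.edgeFinset, ∑ d ∈ Finset.univ.filter (fun d : G.Dart => d.edge = e), F d.fst d.snd := by
        apply Finset.sum_le_sum_of_subset_of_nonneg hsub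
        intro e _ _
        exact Finset.sum_nonneg fun d _ => hnn _ _

theorem stmt8 [Fintype V] (G : SimpleGraph V) (M : Finset (Sym2 V))
    (hMsub : ∀ e ∈ M, e ∈ G.edgeFinset)
    (hMmatch : ∀ e ∈ M, ∀ f ∈ M, e ≠ f → ∀ v, v ∈ e → v ∉ f)
    (hMcard : 1 ≤ M.card)
    (VM : Finset V) (hVM : ∀ v, v ∈ VM ↔ ∃ e ∈ M, v ∈ e)
    (c : ℕ) (hc : M.card ≤ c) :
    ∃ w : V → V → ℝ, (∀ i j, 0 ≤ w i j) ∧ (∀ i j, w i j = w j i) ∧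
      ∃ s : V → Fin c,
        IsNash G (fun _ _ => True) (fun _ _ => 1) w (fun _ _ => 0) s ∧
        0 < welfare G (fun _ _ => True) (fun _ _ => 1) w (fun _ _ => 0) s ∧
        ∃ sstar : V → Fin c,
          (edgesIn G VM : ℝ) / (2 * M.card) ≤
            welfare G (fun _ _ => True) (fun _ _ => 1) w (fun _ _ => 0) sstar /
              welfare G (fun _ _ => True) (fun _ _ => 1) w (fun _ _ => 0) s := by
  classical
  have hc0 : 0 < c := lt_of_lt_of_le hMcard hc
  obtain ⟨φ⟩ : Nonempty (↥M ↪ Fin c) := by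
    apply Function.Embedding.nonempty_of_card_le
    simpa [Fintype.card_coe] using hc
  have huniq : ∀ e ∈ M, ∀ f ∈ M, ∀ v, v ∈ e → v ∈ f → e = f := by
    intro e he f hf v hv hvf
    by_contra hne
    exact hMmatch e he f hf hne v hv hvf
  set d0 : Fin c := ⟨0, hc0⟩ with hd0
  set s : V → Fin c := fun v =>
    if h : ∃ e, e ∈ M ∧ v ∈ e then φ ⟨h.choose, h.choose_spec.1⟩ else d0 with hsdef
  have hs : ∀ v, ∀ (e : Sym2 V) (he : e ∈ M), v ∈ e → s v = φ ⟨e, he⟩ := by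
    intro v e he hv
    have h : ∃ e, e ∈ M ∧ v ∈ e := ⟨e, he, hv⟩
    have : s v = φ ⟨h.choose, h.choose_spec.1⟩ := by rw [hsdef]; exact dif_pos h
    rw [this]
    congr 1
    exact Subtype.ext (huniq _ h.choose_spec.1 _ he v h.choose_spec.2 hv)
  set w : V → V → ℝ := fun i j =>
    if Sym2.mk i j ∈ M then 2
    else if G.Adj i j ∧ i ∈ VM ∧ j ∈ VM then 1 else 0 with hwdef
  have hwnn : ∀ i j, 0 ≤ w i j := by
    intro i j
    rw [hwdef]
    dsimp only
    split_ifs <;> norm_num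
  have hwsymm : ∀ i j, w i j = w j i := by
    intro i j
    rw [hwdef]
    dsimp only
    rw [Sym2.eq_swap, G.adj_comm]
    exact if_congr Iff.rfl rfl (if_congr (and_congr Iff.rfl and_comm) rfl rfl)
  -- if i not in VM, all its weights vanish
  have hw0 : ∀ i j, i ∉ VM → w i j = 0 := by
    intro i j hi
    rw [hwdef]
    dsimp only
    rw [if_neg, if_neg]
    · rintro ⟨-, h, -⟩; exact hi h
    · intro hmem
      exact hi ((hVM i).2 ⟨_, hmem, Sym2.mem_mk_left i j⟩)
  have hw0' : ∀ i j, j ∉ VM → w i j = 0 := fun i j hj => (hwsymm i j).trans (hw0 j i hj)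
  -- same color within VM means matched together
  have hcol : ∀ i j, i ∈ VM → j ∈ VM → i ≠ j → s i = s j → Sym2.mk i j ∈ M := by
    intro i j hi hj hne hsij
    obtain ⟨ei, hei, hiei⟩ := (hVM i).1 hi
    obtain ⟨ej, hej, hjej⟩ := (hVM j).1 hj
    rw [hs i ei hei hiei, hs j ej hej hjej] at hsij
    have : ei = ej := Subtype.ext_iff.1 (φ.injective hsij)
    subst this
    have : ei = Sym2.mk i j := (Sym2.mem_and_mem_iff hne).1 ⟨hiei, hjej⟩
    rwa [← this]
  -- utility of a matched vertex at s is 1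
  have hutil1 : ∀ i ∈ VM,
      util G (fun _ _ => True) (fun _ _ => 1) w (fun _ _ => 0) s i = 1 := by
    intro i hi
    obtain ⟨e, he, hie⟩ := (hVM i).1 hi
    obtain ⟨p, hpe⟩ : ∃ p, Sym2.mk i p = e := ⟨_, Sym2.other_spec hie⟩
    have hpmem : p ∈ e := by rw [← hpe]; exact Sym2.mem_mk_right i p
    have hadj : G.Adj i p := by
      have : e ∈ G.edgeSet := SimpleGraph.mem_edgeFinset.1 (hMsub e he)
      rw [← hpe] at this
      exact this
    have hne : i ≠ p := G.ne_of_adj hadj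
    have hsp : s i = s p := by rw [hs i e he hie, hs p e he hpmem]
    rw [util_eq]
    have hterm : ∀ j ∈ G.neighborFinset i,
        (if s i = s j then w i j / 2 else 0) = if j = p then 1 else 0 := by
      intro j hj
      have hij : i ≠ j := G.ne_of_adj ((SimpleGraph.mem_neighborFinset G i j).1 hj)
      by_cases hjp : j = p
      · subst hjp
        rw [if_pos rfl, if_pos hsp]
        have : w i j = 2 := by
          rw [hwdef]
          dsimp only
          rw [if_pos (by rw [hpe]; exact he)]
        rw [this]; norm_num
      · rw [if_neg hjp]
        by_cases hsij : s i = s j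
        · rw [if_pos hsij]
          have hwz : w i j = 0 := by
            by_cases hjVM : j ∈ VM
            · exfalso
              have hmem : Sym2.mk i j ∈ M := hcol i j hi hjVM hij hsij
              have heq : Sym2.mk i j = e :=
                huniq _ hmem _ he i (Sym2.mem_mk_left i j) hie
              have : j ∈ Sym2.mk i p := by rw [hpe, ← heq]; exact Sym2.mem_mk_right i j
              rcases Sym2.mem_iff.1 this with h | h
              · exact hij h.symm
              · exact hjp h
            · exact hw0' i j hjVM
          rw [hwz]; norm_num
        · rw [if_neg hsij]
    rw [Finset.sum_congr rfl hterm, Finset.sum_ite_eq' (G.neighborFinset i) p fun _ => (1:ℝ)]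
    rw [if_pos ((SimpleGraph.mem_neighborFinset G i p).2 hadj)]
  -- utility of an unmatched vertex is 0 in any profile
  have hutil0 : ∀ (t : V → Fin c) (i : V), i ∉ VM →
      util G (fun _ _ => True) (fun _ _ => 1) w (fun _ _ => 0) t i = 0 := by
    intro t i hi
    rw [util_eq]
    apply Finset.sum_eq_zero
    intro j _
    rw [hw0 i j hi]
    split_ifs <;> norm_num
  have hwelf : welfare G (fun _ _ => True) (fun _ _ => 1) w (fun _ _ => 0) s = VM.card := by
    unfold welfare
    have h1 : ∀ i, util G (fun _ _ => True) (fun _ _ => 1) w (fun _ _ => 0) s i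
        = if i ∈ VM then (1:ℝ) else 0 := by
      intro i
      by_cases hi : i ∈ VM
      · rw [if_pos hi]; exact hutil1 i hi
      · rw [if_neg hi]; exact hutil0 s i hi
    rw [Finset.sum_congr rfl fun i _ => h1 i, Finset.sum_ite_mem, Finset.univ_inter,
      Finset.sum_const, nsmul_eq_mul, mul_one]
  have hVMcard : VM.card ≤ 2 * M.card := by
    have hsub : VM ⊆ M.biUnion (fun e => Finset.univ.filter (fun v => v ∈ e)) := by
      intro v hv
      obtain ⟨e, he, hve⟩ := (hVM v).1 hv
      exact Finset.mem_biUnion.2 ⟨e, he, Finset.mem_filter.2 ⟨Finset.mem_univ v, hve⟩⟩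
    calc VM.card ≤ (M.biUnion (fun e => Finset.univ.filter (fun v => v ∈ e))).card :=
          Finset.card_le_card hsub
      _ ≤ ∑ e ∈ M, (Finset.univ.filter (fun v => v ∈ e)).card := Finset.card_biUnion_le
      _ ≤ ∑ _e ∈ M, 2 := by
          apply Finset.sum_le_sum
          intro e _
          induction' e with a b
          have : Finset.univ.filter (fun v => v ∈ Sym2.mk a b) ⊆ {a, b} := by
            intro v hv
            have := (Finset.mem_filter.1 hv).2
            rw [Sym2.mem_iff] at this
            rcases this with h | h <;> simp [h]
          calc (Finset.univ.filter (fun v => v ∈ Sym2.mk a b)).card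
              ≤ ({a, b} : Finset V).card := Finset.card_le_card this
            _ ≤ 2 := by
                apply le_trans (Finset.card_insert_le a {b})
                simp
      _ = 2 * M.card := by rw [Finset.sum_const, smul_eq_mul, mul_comm]
  have hVMpos : 0 < VM.card := by
    rw [Finset.card_pos]
    obtain ⟨e, he⟩ := Finset.card_pos.1 hMcard
    induction' e with a b
    exact ⟨a, (hVM a).2 ⟨_, he, Sym2.mem_mk_left a b⟩⟩
  refine ⟨w, hwnn, hwsymm, s, ?_, ?_, fun _ => d0, ?_⟩
  · -- Nash
    intro i k
    by_cases hi : i ∈ VM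
    · rw [hutil1 i hi, util_eq]
      have hupd : ∀ j ∈ G.neighborFinset i,
          (if Function.update s i k i = Function.update s i k j
            then w i j / 2 else 0) = if k = s j then w i j / 2 else 0 := by
        intro j hj
        have hij : i ≠ j := G.ne_of_adj ((SimpleGraph.mem_neighborFinset G i j).1 hj)
        rw [Function.update_self, Function.update_of_ne hij.symm]
      rw [Finset.sum_congr rfl hupd]
      obtain ⟨e, he, hie⟩ := (hVM i).1 hi
      by_cases hk : k = s i
      · subst hk
        rw [← util_eq]
        exact le_of_eq (hutil1 i hi)
      · set Tk := VM.filter (fun v => s v = k) with hTkdef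
        have hTk2 : Tk.card ≤ 2 := by
          by_cases hne : Tk.Nonempty
          · obtain ⟨v0, hv0⟩ := hne
            obtain ⟨hv0VM, hv0k⟩ := Finset.mem_filter.1 hv0
            obtain ⟨e0, he0, hv0e0⟩ := (hVM v0).1 hv0VM
            have hsub : ∀ v ∈ Tk, v ∈ e0 := by
              intro v hv
              obtain ⟨hvVM, hvk⟩ := Finset.mem_filter.1 hv
              obtain ⟨e1, he1, hve1⟩ := (hVM v).1 hvVM
              have heq : φ ⟨e1, he1⟩ = φ ⟨e0, he0⟩ := by
                rw [← hs v e1 he1 hve1, ← hs v0 e0 he0 hv0e0, hvk, hv0k]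
              have : e1 = e0 := Subtype.ext_iff.1 (φ.injective heq)
              rwa [← this]
            induction' e0 with a b
            have hss : Tk ⊆ {a, b} := by
              intro v hv
              have := hsub v hv
              rw [Sym2.mem_iff] at this
              rcases this with h | h <;> simp [h]
            calc Tk.card ≤ ({a, b} : Finset V).card := Finset.card_le_card hss
              _ ≤ 2 := by
                  apply le_trans (Finset.card_insert_le a {b})
                  simp
          · rw [Finset.not_nonempty_iff_eq_empty] at hne
            simp [hne]
        have hterm : ∀ j ∈ G.neighborFinset i,
            (if k = s j then w i j / 2 else 0) ≤ if j ∈ Tk then (1:ℝ)/2 else 0 := by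
          intro j hj
          have hij : i ≠ j := G.ne_of_adj ((SimpleGraph.mem_neighborFinset G i j).1 hj)
          by_cases hkj : k = s j
          · rw [if_pos hkj]
            by_cases hjTk : j ∈ Tk
            · rw [if_pos hjTk]
              have hwle : w i j ≤ 1 := by
                have hnm : Sym2.mk i j ∉ M := by
                  intro hmem
                  have heq : Sym2.mk i j = e :=
                    huniq _ hmem _ he i (Sym2.mem_mk_left i j) hie
                  have hje : j ∈ e := by rw [← heq]; exact Sym2.mem_mk_right i j
                  have : s j = s i := by rw [hs j e he hje, hs i e he hie]
                  exact hk (hkj.trans this)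
                rw [hwdef]
                dsimp only
                rw [if_neg hnm]
                split_ifs <;> norm_num
              linarith
            · rw [if_neg hjTk]
              have hjVM : j ∉ VM := fun hjVM =>
                hjTk (Finset.mem_filter.2 ⟨hjVM, hkj.symm⟩)
              rw [hw0' i j hjVM]
              norm_num
          · rw [if_neg hkj]
            split_ifs <;> norm_num
        calc ∑ j ∈ G.neighborFinset i, (if k = s j then w i j / 2 else 0)
            ≤ ∑ j ∈ G.neighborFinset i, (if j ∈ Tk then (1:ℝ)/2 else 0) :=
              Finset.sum_le_sum hterm
          _ = ((G.neighborFinset i ∩ Tk).card : ℝ) * (1/2) := by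
              rw [Finset.sum_ite_mem, Finset.sum_const, nsmul_eq_mul]
          _ ≤ (Tk.card : ℝ) * (1/2) := by
              have := Finset.card_le_card (Finset.inter_subset_right
                (s₁ := G.neighborFinset i) (s₂ := Tk))
              have : ((G.neighborFinset i ∩ Tk).card : ℝ) ≤ (Tk.card : ℝ) := by
                exact_mod_cast this
              linarith
          _ ≤ 1 := by
              have : (Tk.card : ℝ) ≤ 2 := by exact_mod_cast hTk2
              linarith
    · rw [hutil0 _ i hi, hutil0 _ i hi]
  · rw [hwelf]; exact_mod_cast hVMpos
  · -- ratio
    have hstar : (edgesIn G VM : ℝ) ≤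
        welfare G (fun _ _ => True) (fun _ _ => 1) w (fun _ _ => 0) (fun _ => d0) := by
      unfold welfare
      have h1 : ∀ i, util G (fun _ _ => True) (fun _ _ => 1) w (fun _ _ => 0)
          (fun _ => d0) i = ∑ j ∈ G.neighborFinset i, w i j / 2 := by
        intro i
        rw [util_eq]
        apply Finset.sum_congr rfl
        intro j _
        rw [if_pos rfl]
      rw [Finset.sum_congr rfl fun i _ => h1 i]
      apply sum_nbr_ge G VM (fun i j => w i j / 2)
      · intro i j
        have := hwnn i j
        linarith
      · intro i j hadj hiVM hjVM
        have h1 : (1:ℝ) ≤ w i j := by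
          rw [hwdef]
          dsimp only
          split_ifs with h1 h2
          · norm_num
          · norm_num
          · exact absurd ⟨hadj, hiVM, hjVM⟩ h2
        rw [hwsymm j i]
        linarith
    rw [hwelf]
    have hm : (0:ℝ) < VM.card := by exact_mod_cast hVMpos
    have hm2q : (VM.card : ℝ) ≤ 2 * M.card := by exact_mod_cast hVMcard
    have hq : (0:ℝ) < 2 * M.card := lt_of_lt_of_le hm hm2q
    have hE : (0:ℝ) ≤ (edgesIn G VM : ℝ) := Nat.cast_nonneg _
    calc (edgesIn G VM : ℝ) / (2 * M.card)
        ≤ (edgesIn G VM : ℝ) / VM.card := by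
          apply div_le_div_of_nonneg_left hE hm hm2q
      _ ≤ welfare G (fun _ _ => True) (fun _ _ => 1) w (fun _ _ => 0) (fun _ => d0)
            / VM.card := by
          exact (div_le_div_iff_of_pos_right hm).2 hstar
      _ = _ := rfl
end

section
/- Let G = (V,E) be a finite simple graph with at least one edge and chromatic number χ(G), and let c ≥ χ(G) + 1. Then there exist strategy sets S_i ⊆ [c] with |S_i| = 2 for each i ∈ V such that the resulting asymmetric coordination game on G with unit edge weights (w_e = 1 for all e ∈ E), equal-split distribution rule and no individual preferences has a pure Nash equilibrium s with u(s) = 0, while the profile s* in which every player plays a common color satisfies u(s*) = |E| > 0. In particular, the (ε,1)-Price of Anarchy over such games on G is unbounded for every ε ≥ 1. -/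
open Finset
open scoped Classical

variable {V : Type*}

theorem stmt9 [Fintype V] (G : SimpleGraph V)
    (hE : G.edgeFinset.Nonempty)
    (c : ℕ) (hc : G.chromaticNumber + 1 ≤ (c : ℕ∞)) :
    ∃ St : V → Finset (Fin c), (∀ i, (St i).card = 2) ∧
      ∃ s : V → Fin c, (∀ i, s i ∈ St i) ∧
        IsNashA G (fun _ _ => 1) St s ∧
        welfareA G (fun _ _ => 1) s = 0 ∧
        ∃ k0 : Fin c, (∀ i, k0 ∈ St i) ∧
          welfareA G (fun _ _ => 1) (fun _ => k0) = G.edgeFinset.card ∧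
          (0 : ℝ) < welfareA G (fun _ _ => 1) (fun _ => k0) := by
  have htop : G.chromaticNumber ≠ ⊤ := by
    intro h; rw [h] at hc; simp at hc
  obtain ⟨n, hn⟩ : ∃ m : ℕ, G.chromaticNumber = m := by
    lift G.chromaticNumber to ℕ using htop with n; exact ⟨n, rfl⟩
  rw [hn] at hc
  have hnc : n + 1 ≤ c := by exact_mod_cast hc
  have hc1 : 1 ≤ c := by omega
  have hcol : G.Colorable (c - 1) := by
    rw [← SimpleGraph.chromaticNumber_le_iff_colorable, hn]
    exact_mod_cast (by omega : n ≤ c - 1)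
  obtain ⟨C⟩ := hcol
  have hlt : ∀ i : V, (C i).val + 1 < c := fun i => by
    have := (C i).isLt; omega
  set k0 : Fin c := ⟨0, hc1⟩ with hk0
  set s : V → Fin c := fun i => ⟨(C i).val + 1, hlt i⟩ with hs
  have hne : ∀ i, k0 ≠ s i := fun i => by
    intro h
    have := congrArg Fin.val h
    simp [hk0, hs] at this
  have hsne : ∀ i j, G.Adj i j → s i ≠ s j := fun i j hij h => by
    have := congrArg Fin.val h
    simp [hs] at this
    exact C.valid hij (Fin.ext this)
  have hutil0 : ∀ i, utilA G (fun _ _ => 1) s i = 0 := fun i => by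
    unfold utilA
    apply Finset.sum_eq_zero
    intro j hj
    rw [if_neg (hsne i j (G.mem_neighborFinset i j |>.mp hj))]
  have hwc : welfareA G (fun _ _ => 1) (fun _ => k0) = (G.edgeFinset.card : ℝ) := by
    unfold welfareA utilA
    simp only [if_pos rfl, if_true]
    have h1 : ∀ i : V, ∑ _j ∈ G.neighborFinset i, ((1 : ℝ) / 2) = (G.degree i : ℝ) / 2 :=
      fun i => by
        rw [Finset.sum_const, SimpleGraph.card_neighborFinset_eq_degree]; ring
    rw [Finset.sum_congr rfl fun i _ => h1 i, ← Finset.sum_div]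
    have hdeg : ((∑ v, G.degree v : ℕ) : ℝ) = 2 * (G.edgeFinset.card : ℝ) := by
      exact_mod_cast congrArg (Nat.cast : ℕ → ℝ) G.sum_degrees_eq_twice_card_edges
    push_cast at hdeg ⊢
    rw [hdeg]; ring
  refine ⟨fun i => {k0, s i}, fun i => ?_, s, fun i => ?_, ?_, ?_, k0, fun i => ?_, hwc, ?_⟩
  · rw [Finset.card_insert_of_notMem (by simp [hne i]), Finset.card_singleton]
  · simp
  · -- Nash
    intro i k hk
    rw [hutil0 i]
    unfold utilA
    apply Finset.sum_nonpos
    intro j hj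
    have hij : G.Adj i j := (G.mem_neighborFinset i j).mp hj
    have hji : j ≠ i := fun h => (G.irrefl (h ▸ hij))
    rw [Function.update_self, Function.update_of_ne hji]
    have hk' : k = k0 ∨ k = s i := by simpa using hk
    have : k ≠ s j := by
      rcases hk' with h | h
      · exact h ▸ hne j
      · exact h ▸ hsne i j hij
    rw [if_neg this]
  · unfold welfareA
    exact Finset.sum_eq_zero fun i _ => hutil0 i
  · simp
  · rw [hwc]
    exact_mod_cast Finset.card_pos.mpr hE
end

section
/- Let ε ≥ 1 and k ≥ 2, and let Γ be an asymmetric coordination game on a finite simple graph G with equal-split distribution rule and no individual preferences. Then for every (ε,k)-equilibrium s of Γ and every strategy profile s*, u(s*) ≤ 2ε·Δ(G)·u(s), where Δ(G) is the maximum degree of G. -/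
open Finset
open scoped Classical

variable {V : Type*}

theorem stmt11 [Fintype V] (G : SimpleGraph V)
    (ε : ℝ) (hε : 1 ≤ ε) (k : ℕ) (hk : 2 ≤ k)
    (c : ℕ) (St : V → Finset (Fin c)) (hSt : ∀ i, (St i).Nonempty)
    (w : V → V → ℝ) (hw : ∀ i j, 0 ≤ w i j) (hwsymm : ∀ i j, w i j = w j i)
    (s : V → Fin c) (hsv : ∀ i, s i ∈ St i)
    (hs : IsEpsKEq G w St ε k s)
    (sstar : V → Fin c) (hsstarv : ∀ i, sstar i ∈ St i) :
    welfareA G w sstar ≤ 2 * ε * (G.maxDegree : ℝ) * welfareA G w s := by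
  classical
  have hε0 : (0:ℝ) ≤ ε := le_trans zero_le_one hε
  set u := utilA G w s with hu
  have hunn : ∀ i, 0 ≤ u i := fun i => Finset.sum_nonneg (fun j _ => by
    split
    · exact div_nonneg (hw i j) (by norm_num)
    · exact le_refl 0)
  -- key pair lemma
  have key : ∀ i j, G.Adj i j → sstar i = sstar j →
      w i j / 2 ≤ ε * (u i + u j) := by
    intro i j hij hss
    have hne : i ≠ j := hij.ne
    set s' : V → Fin c := fun v => if v = i ∨ v = j then sstar v else s v with hs'
    have hs'i : s' i = sstar i := by simp [hs']
    have hs'j : s' j = sstar j := by simp [hs']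
    have hK : ∃ m ∈ ({i, j} : Finset V), utilA G w s' m ≤ ε * utilA G w s m := by
      apply hs ({i, j} : Finset V) ⟨i, by simp⟩
      · calc ({i, j} : Finset V).card ≤ ({j} : Finset V).card + 1 :=
              Finset.card_insert_le _ _
          _ ≤ k := by simpa using hk
      · intro v hv
        simp only [Finset.mem_insert, Finset.mem_singleton] at hv
        have : s' v = sstar v := by simp [hs', hv]
        rw [this]; exact hsstarv v
      · intro v hv
        simp only [Finset.mem_insert, Finset.mem_singleton, not_or] at hv
        simp [hs', hv.1, hv.2]
    obtain ⟨m, hm, hle⟩ := hK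
    have hterm : w i j / 2 ≤ utilA G w s' m := by
      simp only [Finset.mem_insert, Finset.mem_singleton] at hm
      have nonneg : ∀ x ∈ G.neighborFinset m,
          (0:ℝ) ≤ if s' m = s' x then w m x / 2 else 0 := fun x _ => by
        split
        · exact div_nonneg (hw m x) (by norm_num)
        · exact le_refl 0
      rcases hm with rfl | rfl
      · have hjmem : j ∈ G.neighborFinset m := by
          rw [SimpleGraph.mem_neighborFinset]; exact hij
        have := Finset.single_le_sum nonneg hjmem
        calc w m j / 2 = (if s' m = s' j then w m j / 2 else 0) := by
              rw [if_pos]; rw [hs'i, hs'j]; exact hss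
          _ ≤ utilA G w s' m := this
      · have himem : i ∈ G.neighborFinset m := by
          rw [SimpleGraph.mem_neighborFinset]; exact hij.symm
        have := Finset.single_le_sum nonneg himem
        calc w i m / 2 = (if s' m = s' i then w m i / 2 else 0) := by
              rw [if_pos, hwsymm]; rw [hs'i, hs'j]; exact hss.symm
          _ ≤ utilA G w s' m := this
    have hmbound : utilA G w s m ≤ u i + u j := by
      simp only [Finset.mem_insert, Finset.mem_singleton] at hm
      rcases hm with rfl | rfl
      · simp only [← hu]; linarith [hunn j]
      · simp only [← hu]; linarith [hunn i]
    calc w i j / 2 ≤ utilA G w s' m := hterm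
      _ ≤ ε * utilA G w s m := hle
      _ ≤ ε * (u i + u j) := mul_le_mul_of_nonneg_left hmbound hε0
  -- bound welfareA sstar
  have step1 : welfareA G w sstar ≤
      ∑ i, ∑ j ∈ G.neighborFinset i, ε * (u i + u j) := by
    apply Finset.sum_le_sum
    intro i _
    apply Finset.sum_le_sum
    intro j hj
    rw [SimpleGraph.mem_neighborFinset] at hj
    split
    · exact key i j hj (by assumption)
    · exact mul_nonneg hε0 (add_nonneg (hunn i) (hunn j))
  have hsplit : ∑ i, ∑ j ∈ G.neighborFinset i, ε * (u i + u j)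
      = ε * ((∑ i, (G.degree i : ℝ) * u i) + ∑ i, ∑ j ∈ G.neighborFinset i, u j) := by
    have hi : ∀ i, ∑ j ∈ G.neighborFinset i, ε * (u i + u j)
        = ε * ((G.degree i : ℝ) * u i) + ε * ∑ j ∈ G.neighborFinset i, u j := by
      intro i
      rw [← Finset.mul_sum, ← mul_add]
      congr 1
      rw [Finset.sum_add_distrib, Finset.sum_const,
        SimpleGraph.card_neighborFinset_eq_degree, nsmul_eq_mul]
    calc ∑ i, ∑ j ∈ G.neighborFinset i, ε * (u i + u j)
        = ∑ i, (ε * ((G.degree i : ℝ) * u i) + ε * ∑ j ∈ G.neighborFinset i, u j) :=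
          Finset.sum_congr rfl (fun i _ => hi i)
      _ = ε * ((∑ i, (G.degree i : ℝ) * u i) + ∑ i, ∑ j ∈ G.neighborFinset i, u j) := by
          rw [Finset.sum_add_distrib, ← Finset.mul_sum, ← Finset.mul_sum, ← mul_add]
  have hswap : ∑ i, ∑ j ∈ G.neighborFinset i, u j = ∑ i, (G.degree i : ℝ) * u i := by
    have h1 : ∀ i : V, ∑ j ∈ G.neighborFinset i, u j
        = ∑ j : V, if G.Adj i j then u j else 0 := by
      intro i
      rw [SimpleGraph.neighborFinset_eq_filter, Finset.sum_filter]
    have h2 : ∀ i : V, ∑ j ∈ G.neighborFinset i, u i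
        = (G.degree i : ℝ) * u i := by
      intro i
      rw [Finset.sum_const, SimpleGraph.card_neighborFinset_eq_degree, nsmul_eq_mul]
    calc ∑ i, ∑ j ∈ G.neighborFinset i, u j
        = ∑ i, ∑ j : V, if G.Adj i j then u j else 0 := by
          exact Finset.sum_congr rfl (fun i _ => h1 i)
      _ = ∑ j : V, ∑ i, if G.Adj i j then u j else 0 := Finset.sum_comm
      _ = ∑ j : V, ∑ i, if G.Adj j i then u j else 0 := by
          apply Finset.sum_congr rfl; intro j _
          apply Finset.sum_congr rfl; intro i _
          simp [SimpleGraph.adj_comm]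
      _ = ∑ j : V, ∑ i ∈ G.neighborFinset j, u j := by
          apply Finset.sum_congr rfl; intro j _
          rw [SimpleGraph.neighborFinset_eq_filter, Finset.sum_filter]
      _ = ∑ j, (G.degree j : ℝ) * u j := Finset.sum_congr rfl (fun j _ => h2 j)
  have hdeg : ∑ i, (G.degree i : ℝ) * u i ≤ (G.maxDegree : ℝ) * welfareA G w s := by
    rw [welfareA, Finset.mul_sum]
    apply Finset.sum_le_sum
    intro i _
    exact mul_le_mul_of_nonneg_right
      (by exact_mod_cast G.degree_le_maxDegree i) (hunn i)
  calc welfareA G w sstar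
      ≤ ∑ i, ∑ j ∈ G.neighborFinset i, ε * (u i + u j) := step1
    _ = ε * ((∑ i, (G.degree i : ℝ) * u i) + ∑ i, ∑ j ∈ G.neighborFinset i, u j) := hsplit
    _ = ε * (2 * ∑ i, (G.degree i : ℝ) * u i) := by rw [hswap]; ring
    _ ≤ ε * (2 * ((G.maxDegree : ℝ) * welfareA G w s)) := by
        apply mul_le_mul_of_nonneg_left _ hε0
        linarith
    _ = 2 * ε * (G.maxDegree : ℝ) * welfareA G w s := by ring
end

section
/- Let ε ≥ 1, k ≥ 2 and c ≥ 3, and let G be a finite simple graph with maximum degree Δ(G) > k − 1. Then there exist strategy sets S_i ⊆ [c] and nonnegative edge weights w such that the resulting asymmetric coordination game on G with equal-split distribution rule and no individual preferences has an (ε,k)-equilibrium s with u(s) = k − 1 > 0 and a strategy profile s* with u(s*) = (k−1) + ε·(Δ(G) − k + 1); hence u(s*)/u(s) ≥ ε·(Δ(G)/(k−1) − 1). -/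
open Finset
open scoped Classical

variable {V : Type*}

set_option linter.unusedSectionVars false
set_option maxHeartbeats 1000000

lemma my_sum_const {α : Type*} (s : Finset α) (f : α → ℝ) (r : ℝ)
    (h : ∀ x ∈ s, f x = r) : ∑ x ∈ s, f x = s.card * r := by
  rw [Finset.sum_congr rfl h, Finset.sum_const, nsmul_eq_mul]

section Aux

variable [Fintype V] (G : SimpleGraph V) (ε : ℝ) (v : V) (A B : Finset V)

noncomputable def cw : V → V → ℝ := fun i j =>
  if (i = v ∧ j ∈ A) ∨ (j = v ∧ i ∈ A) then 1
  else if (i = v ∧ j ∈ B) ∨ (j = v ∧ i ∈ B) then ε else 0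

lemma cw_nonneg (hε : 1 ≤ ε) (i j : V) : 0 ≤ cw ε v A B i j := by
  unfold cw; split_ifs <;> linarith

lemma cw_symm (i j : V) : cw ε v A B i j = cw ε v A B j i := by
  unfold cw
  exact if_congr or_comm rfl (if_congr or_comm rfl rfl)

lemma cw_off {i j : V} (hi : i ≠ v) (hj : j ≠ v) : cw ε v A B i j = 0 := by
  have h1 : ¬((i = v ∧ j ∈ A) ∨ (j = v ∧ i ∈ A)) := by
    rintro (⟨h, _⟩ | ⟨h, _⟩); exacts [hi h, hj h]
  have h2 : ¬((i = v ∧ j ∈ B) ∨ (j = v ∧ i ∈ B)) := by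
    rintro (⟨h, _⟩ | ⟨h, _⟩); exacts [hi h, hj h]
  unfold cw
  rw [if_neg h1, if_neg h2]

lemma cw_Av {a : V} (ha : a ∈ A) : cw ε v A B a v = 1 := by
  unfold cw; rw [if_pos (Or.inr ⟨rfl, ha⟩)]

lemma cw_Bv (hd : Disjoint A B) (hvB : v ∉ B) {b : V} (hb : b ∈ B) :
    cw ε v A B b v = ε := by
  have hbA : b ∉ A := fun h => (Finset.disjoint_left.mp hd h) hb
  have hbv : b ≠ v := fun h => hvB (h ▸ hb)
  have h1 : ¬((b = v ∧ v ∈ A) ∨ (v = v ∧ b ∈ A)) := by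
    rintro (⟨h, _⟩ | ⟨_, h⟩); exacts [hbv h, hbA h]
  unfold cw
  rw [if_neg h1, if_pos (Or.inr ⟨rfl, hb⟩)]

lemma utilA_other (hAB : G.neighborFinset v = A ∪ B) {c : ℕ} (t : V → Fin c)
    {i : V} (hi : i ≠ v) (hiAB : i ∉ A ∪ B) :
    utilA G (cw ε v A B) t i = 0 := by
  unfold utilA
  apply Finset.sum_eq_zero
  intro j hj
  have hjv : j ≠ v := by
    rintro rfl
    apply hiAB
    rw [← hAB, SimpleGraph.mem_neighborFinset]
    exact ((SimpleGraph.mem_neighborFinset _ _ _).mp hj).symm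
  rw [cw_off ε v A B hi hjv]
  simp

lemma utilA_mem (hAB : G.neighborFinset v = A ∪ B) {c : ℕ} (t : V → Fin c)
    {i : V} (hi : i ∈ A ∪ B) :
    utilA G (cw ε v A B) t i = if t i = t v then cw ε v A B i v / 2 else 0 := by
  have hvAB : v ∉ A ∪ B := by
    rw [← hAB]; simp
  have hiv : i ≠ v := fun h => hvAB (h ▸ hi)
  have hvN : v ∈ G.neighborFinset i := by
    rw [SimpleGraph.mem_neighborFinset]
    exact ((SimpleGraph.mem_neighborFinset _ _ _).mp (by rw [hAB]; exact hi)).symm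
  unfold utilA
  exact Finset.sum_eq_single_of_mem v hvN
    (fun j _ hjv => by rw [cw_off ε v A B hiv hjv]; simp)

lemma utilA_v (hAB : G.neighborFinset v = A ∪ B) (hd : Disjoint A B)
    {c : ℕ} (t : V → Fin c) :
    utilA G (cw ε v A B) t v =
      (∑ a ∈ A, if t v = t a then (1:ℝ)/2 else 0) +
      (∑ b ∈ B, if t v = t b then ε/2 else 0) := by
  have hvAB : v ∉ A ∪ B := by rw [← hAB]; simp
  have hvB : v ∉ B := fun h => hvAB (Finset.mem_union_right _ h)
  unfold utilA
  rw [hAB, Finset.sum_union hd]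
  congr 1
  · refine Finset.sum_congr rfl fun a ha => ?_
    have : cw ε v A B v a = 1 := by unfold cw; rw [if_pos (Or.inl ⟨rfl, ha⟩)]
    rw [this]
  · refine Finset.sum_congr rfl fun b hb => ?_
    have : cw ε v A B v b = ε := by
      have hbA : b ∉ A := fun h => (Finset.disjoint_left.mp hd h) hb
      have hbv : b ≠ v := fun h => hvB (h ▸ hb)
      have h1 : ¬((v = v ∧ b ∈ A) ∨ (b = v ∧ v ∈ A)) := by
        rintro (⟨_, h⟩ | ⟨h, _⟩); exacts [hbA h, hbv h]
      unfold cw; rw [if_neg h1, if_pos (Or.inl ⟨rfl, hb⟩)]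
    rw [this]

lemma welfareA_eq (hAB : G.neighborFinset v = A ∪ B)
    {c : ℕ} (t : V → Fin c) :
    welfareA G (cw ε v A B) t =
      utilA G (cw ε v A B) t v + ∑ i ∈ A ∪ B, utilA G (cw ε v A B) t i := by
  have hvAB : v ∉ A ∪ B := by rw [← hAB]; simp
  unfold welfareA
  rw [← Finset.sum_subset (Finset.subset_univ (insert v (A ∪ B)))
      (fun x _ hx => utilA_other G ε v A B hAB t
        (fun h => hx (by rw [h]; exact Finset.mem_insert_self _ _))
        (fun h => hx (Finset.mem_insert_of_mem h))),
    Finset.sum_insert hvAB]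

end Aux

theorem stmt12 [Fintype V] (G : SimpleGraph V)
    (ε : ℝ) (hε : 1 ≤ ε) (k : ℕ) (hk : 2 ≤ k)
    (c : ℕ) (hc : 3 ≤ c)
    (hΔ : k - 1 < G.maxDegree) :
    ∃ (St : V → Finset (Fin c)) (w : V → V → ℝ),
      (∀ i, (St i).Nonempty) ∧ (∀ i j, 0 ≤ w i j) ∧ (∀ i j, w i j = w j i) ∧
      ∃ s : V → Fin c, (∀ i, s i ∈ St i) ∧ IsEpsKEq G w St ε k s ∧
        welfareA G w s = (k : ℝ) - 1 ∧
        ∃ sstar : V → Fin c, (∀ i, sstar i ∈ St i) ∧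
          welfareA G w sstar = ((k : ℝ) - 1) + ε * ((G.maxDegree : ℝ) - k + 1) := by
  have hεpos : (0:ℝ) < ε := lt_of_lt_of_le one_pos hε
  have hne : Nonempty V := by
    by_contra h
    rw [not_nonempty_iff] at h
    have h0 : G.maxDegree ≤ 0 := G.maxDegree_le_of_forall_degree_le 0 (fun w => isEmptyElim w)
    omega
  obtain ⟨v, hv⟩ := G.exists_maximal_degree_vertex
  have hdeg : k ≤ G.degree v := by omega
  obtain ⟨A, hAsub, hAcard⟩ := Finset.exists_subset_card_eq
    (show k - 1 ≤ (G.neighborFinset v).card by rw [G.card_neighborFinset_eq_degree]; omega)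
  set B := G.neighborFinset v \ A with hB
  have hAB : G.neighborFinset v = A ∪ B := (Finset.union_sdiff_of_subset hAsub).symm
  have hd : Disjoint A B := Finset.disjoint_sdiff
  have hvAB : v ∉ A ∪ B := by rw [← hAB]; simp
  have hvA : v ∉ A := fun h => hvAB (Finset.mem_union_left _ h)
  have hvB : v ∉ B := fun h => hvAB (Finset.mem_union_right _ h)
  have hBcard : B.card = G.degree v - (k - 1) := by
    rw [hB, Finset.card_sdiff_of_subset hAsub, G.card_neighborFinset_eq_degree, hAcard]
  -- colors
  set c0 : Fin c := ⟨0, by omega⟩ with hc0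
  set c1 : Fin c := ⟨1, by omega⟩ with hc1
  set c2 : Fin c := ⟨2, by omega⟩ with hc2
  have h01 : c0 ≠ c1 := by rw [hc0, hc1]; simp [Fin.ext_iff]
  have h02 : c0 ≠ c2 := by rw [hc0, hc2]; simp [Fin.ext_iff]
  have h12 : c1 ≠ c2 := by rw [hc1, hc2]; simp [Fin.ext_iff]
  -- strategy sets and profiles
  set St : V → Finset (Fin c) :=
    fun i => if i ∈ B then {c1, c2} else if i = v ∨ i ∈ A then {c0, c1} else {c0} with hSt
  set s : V → Fin c := fun i => if i ∈ B then c2 else c0 with hs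
  set sstar : V → Fin c := fun i => if i = v ∨ i ∈ A ∨ i ∈ B then c1 else c0 with hstar
  have hsv : s v = c0 := by simp [hs, hvB]
  have hsa : ∀ a ∈ A, s a = c0 := fun a ha => by
    simp [hs, Finset.disjoint_left.mp hd ha]
  have hsb : ∀ b ∈ B, s b = c2 := fun b hb => by simp [hs, hb]
  have hStv : St v = {c0, c1} := by simp [hSt, hvB]
  have hSta : ∀ a ∈ A, St a = {c0, c1} := fun a ha => by
    simp [hSt, Finset.disjoint_left.mp hd ha, ha]
  have hStb : ∀ b ∈ B, St b = {c1, c2} := fun b hb => by simp [hSt, hb]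
  have hstv : sstar v = c1 := by simp [hstar]
  have hsta : ∀ a ∈ A, sstar a = c1 := fun a ha => by simp [hstar, ha]
  have hstb : ∀ b ∈ B, sstar b = c1 := fun b hb => by simp [hstar, hb]
  -- utilities at s
  have husv : utilA G (cw ε v A B) s v = A.card * (1/2 : ℝ) := by
    rw [utilA_v G ε v A B hAB hd,
      my_sum_const A _ ((1:ℝ)/2) (fun a ha => if_pos (by rw [hsv, hsa a ha])),
      Finset.sum_eq_zero (fun b hb => if_neg (by rw [hsv, hsb b hb]; exact h02)),
      add_zero]
  have husa : ∀ a ∈ A, utilA G (cw ε v A B) s a = 1/2 := fun a ha => by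
    rw [utilA_mem G ε v A B hAB s (Finset.mem_union_left _ ha), cw_Av ε v A B ha,
      if_pos (by rw [hsa a ha, hsv])]
  have husb : ∀ b ∈ B, utilA G (cw ε v A B) s b = 0 := fun b hb => by
    rw [utilA_mem G ε v A B hAB s (Finset.mem_union_right _ hb),
      if_neg (by rw [hsb b hb, hsv]; exact Ne.symm h02)]
  -- welfare at s
  have hAc : (A.card : ℝ) = (k:ℝ) - 1 := by
    rw [hAcard, Nat.cast_sub (by omega : 1 ≤ k), Nat.cast_one]
  have hws : welfareA G (cw ε v A B) s = (k:ℝ) - 1 := by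
    rw [welfareA_eq G ε v A B hAB, husv, Finset.sum_union hd,
      my_sum_const A _ ((1:ℝ)/2) husa, Finset.sum_eq_zero husb, add_zero, hAc]
    ring
  -- welfare at sstar
  have hwstar : welfareA G (cw ε v A B) sstar
      = ((k:ℝ) - 1) + ε * ((G.maxDegree : ℝ) - k + 1) := by
    have e0 : utilA G (cw ε v A B) sstar v = A.card * (1/2 : ℝ) + B.card * (ε/2) := by
      rw [utilA_v G ε v A B hAB hd,
        my_sum_const A _ ((1:ℝ)/2) (fun a ha => if_pos (by rw [hstv, hsta a ha])),
        my_sum_const B _ (ε/2) (fun b hb => if_pos (by rw [hstv, hstb b hb]))]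
    have e1 : ∑ i ∈ A, utilA G (cw ε v A B) sstar i = A.card * (1/2 : ℝ) := by
      refine my_sum_const A _ ((1:ℝ)/2) (fun a ha => ?_)
      rw [utilA_mem G ε v A B hAB sstar (Finset.mem_union_left _ ha), cw_Av ε v A B ha,
        if_pos (by rw [hsta a ha, hstv])]
    have e2 : ∑ i ∈ B, utilA G (cw ε v A B) sstar i = B.card * (ε/2) := by
      refine my_sum_const B _ (ε/2) (fun b hb => ?_)
      rw [utilA_mem G ε v A B hAB sstar (Finset.mem_union_right _ hb),
        cw_Bv ε v A B hd hvB hb, if_pos (by rw [hstb b hb, hstv])]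
    have hBc : (B.card : ℝ) = (G.maxDegree : ℝ) - (k:ℝ) + 1 := by
      rw [hBcard, ← hv, Nat.cast_sub (by omega : k - 1 ≤ G.maxDegree),
        Nat.cast_sub (by omega : 1 ≤ k), Nat.cast_one]
      ring
    rw [welfareA_eq G ε v A B hAB, e0, Finset.sum_union hd, e1, e2, hAc, hBc]
    ring
  refine ⟨St, cw ε v A B, ?_, cw_nonneg ε v A B hε, cw_symm ε v A B, s, ?_, ?_, hws,
    sstar, ?_, hwstar⟩
  · -- nonempty strategy sets
    intro i
    simp only [hSt]
    split_ifs <;> simp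
  · -- s i ∈ St i
    intro i
    by_cases hb : i ∈ B
    · rw [hStb i hb, hsb i hb]; simp
    · have hsi : s i = c0 := by simp [hs, hb]
      rw [hsi, hSt]
      simp only [hb, if_false]
      split_ifs <;> simp
  · -- (ε,k)-equilibrium
    intro K hKne hKcard s' hmem hfix
    have hs'Bne0 : ∀ b ∈ B, s' b ≠ c0 := by
      intro b hb h
      by_cases hbK : b ∈ K
      · have hm := hmem b hbK
        rw [hStb b hb, h] at hm
        simp only [Finset.mem_insert, Finset.mem_singleton] at hm
        rcases hm with hm | hm
        exacts [h01 hm, h02 hm]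
      · rw [hfix b hbK, hsb b hb] at h
        exact h02 h.symm
    by_cases hKA : (K ∩ A).Nonempty
    · obtain ⟨a, haKA⟩ := hKA
      rw [Finset.mem_inter] at haKA
      refine ⟨a, haKA.1, ?_⟩
      rw [utilA_mem G ε v A B hAB s' (Finset.mem_union_left _ haKA.2),
        cw_Av ε v A B haKA.2, husa a haKA.2]
      split_ifs <;> linarith
    · by_cases hvK : v ∈ K
      · refine ⟨v, hvK, ?_⟩
        rw [husv, utilA_v G ε v A B hAB hd]
        have hAnK : ∀ a ∈ A, a ∉ K :=
          fun a ha haK => hKA ⟨a, Finset.mem_inter.mpr ⟨haK, ha⟩⟩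
        have hs'a : ∀ a ∈ A, s' a = c0 :=
          fun a ha => by rw [hfix a (hAnK a ha), hsa a ha]
        have hs'v : s' v = c0 ∨ s' v = c1 := by
          have hm := hmem v hvK
          rw [hStv] at hm
          simpa using hm
        rcases hs'v with h' | h'
        · have e1 : (∑ a ∈ A, if s' v = s' a then (1:ℝ)/2 else 0) = A.card * (1/2 : ℝ) :=
            my_sum_const A _ ((1:ℝ)/2) (fun a ha => if_pos (by rw [h', hs'a a ha]))
          have e2 : (∑ b ∈ B, if s' v = s' b then ε/2 else 0) = 0 :=
            Finset.sum_eq_zero fun b hb =>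
              if_neg (fun h => hs'Bne0 b hb (h.symm.trans h'))
          rw [e1, e2, add_zero]
          have hA0 : (0:ℝ) ≤ (A.card : ℝ) * (1/2) := mul_nonneg (Nat.cast_nonneg _) (by norm_num)
          nlinarith
        · have e1 : (∑ a ∈ A, if s' v = s' a then (1:ℝ)/2 else 0) = 0 :=
            Finset.sum_eq_zero fun a ha =>
              if_neg (by rw [h', hs'a a ha]; exact fun h => h01 h.symm)
          have e2 : (∑ b ∈ B, if s' v = s' b then ε/2 else 0) ≤ ((k - 1 : ℕ) : ℝ) * (ε/2) := by
            have hsub : B.filter (fun b => s' v = s' b) ⊆ K.erase v := by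
              intro b hb
              rw [Finset.mem_filter] at hb
              obtain ⟨hbB, hbeq⟩ := hb
              rw [Finset.mem_erase]
              refine ⟨fun h => hvB (h ▸ hbB), ?_⟩
              by_contra hbK
              exact h12 (h'.symm.trans (hbeq.trans ((hfix b hbK).trans (hsb b hbB))))
            have hcard : (B.filter fun b => s' v = s' b).card ≤ k - 1 := by
              have h1 := Finset.card_le_card hsub
              have h2 : (K.erase v).card = K.card - 1 := Finset.card_erase_of_mem hvK
              omega
            rw [← Finset.sum_filter]
            have heq : (∑ b ∈ B.filter (fun b => s' v = s' b), ε/2)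
                = ((B.filter fun b => s' v = s' b).card : ℝ) * (ε/2) :=
              my_sum_const _ _ _ (fun _ _ => rfl)
            rw [heq]
            have hcc : ((B.filter fun b => s' v = s' b).card : ℝ) ≤ ((k - 1 : ℕ) : ℝ) := by
              exact_mod_cast hcard
            have : (0:ℝ) ≤ ε/2 := by linarith
            exact mul_le_mul_of_nonneg_right hcc this
          rw [e1, zero_add, hAcard]
          calc (∑ b ∈ B, if s' v = s' b then ε/2 else 0)
              ≤ ((k - 1 : ℕ) : ℝ) * (ε/2) := e2
            _ = ε * (((k - 1 : ℕ) : ℝ) * (1/2)) := by ring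
      · obtain ⟨j, hj⟩ := hKne
        refine ⟨j, hj, ?_⟩
        have hjv : j ≠ v := fun h => hvK (h ▸ hj)
        have hjA : j ∉ A := fun h => hKA ⟨j, Finset.mem_inter.mpr ⟨hj, h⟩⟩
        by_cases hjB : j ∈ B
        · have h0 : ¬ (s' j = s' v) :=
            fun h => hs'Bne0 j hjB (h.trans ((hfix v hvK).trans hsv))
          rw [utilA_mem G ε v A B hAB s' (Finset.mem_union_right _ hjB), husb j hjB,
            if_neg h0, mul_zero]
        · have hjAB : j ∉ A ∪ B := by
            rw [Finset.mem_union]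
            rintro (h | h); exacts [hjA h, hjB h]
          rw [utilA_other G ε v A B hAB s' hjv hjAB,
            utilA_other G ε v A B hAB s hjv hjAB, mul_zero]
  · -- sstar i ∈ St i
    intro i
    by_cases hb : i ∈ B
    · rw [hStb i hb, hstb i hb]; simp
    · by_cases h2 : i = v ∨ i ∈ A
      · have hsi : sstar i = c1 := by
          rcases h2 with rfl | hA
          exacts [hstv, hsta i hA]
        have hSti : St i = {c0, c1} := by
          rcases h2 with rfl | hA
          exacts [hStv, hSta i hA]
        rw [hsi, hSti]; simp
      · push_neg at h2
        have hsi : sstar i = c0 := by simp [hstar, h2.1, h2.2, hb]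
        have hSti : St i = {c0} := by simp [hSt, h2.1, h2.2, hb]
        rw [hsi, hSti]; simp
end
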